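/- arXiv:1210.4937 — 4 statements merged into one kernel-verified Lean document; each statement's English description precedes it below -/
import Mathlib

section
/- Let A : ℕ → Bool be a sequence that is not computable, and let B : ℕ → Bool be its Walsh–Hadamard encoding. Then B is absolutely undecidable: there is no partial computable function φ : ℕ →. Bool whose domain has positive upper density and which B extends. -/
set_option maxHeartbeats 1000000


/-- The upper density of a set of naturals:
`ρ(D) = limsup_{n→∞} |D ∩ {0,…,n−1}| / n`. -/
noncomputable def upperDensity (D : Set ℕ) : ℝ :=
  Filter.limsup (fun n => (Nat.card (D ∩ Set.Iio n : Set ℕ) : ℝ) / n) Filter.atTop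

/-- A sequence `A : ℕ → Bool` extends a partial function `φ : ℕ →. Bool`
if `A m = φ m` for every `m` in the domain of `φ`. -/
def SeqExtends (A : ℕ → Bool) (φ : ℕ →. Bool) : Prop :=
  ∀ m, ∀ b ∈ φ m, A m = b

/-- A Boolean identified with an element of `ℤ/2`. -/
def boolToZMod2 (b : Bool) : ZMod 2 := if b then 1 else 0

/-- The Walsh–Hadamard encoding of a sequence `A : ℕ → Bool`:
`B 0 = false`, and for `n ≥ 1` written uniquely as `n = 2^k + j` with `j < 2^k`
(so `k = Nat.log 2 n` and `j = n - 2^k`),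
`B n = Σ_{i<k} A(i)·j_i (mod 2)` where `j_i` is the `i`-th binary digit of `j`. -/
def walshHadamard (A : ℕ → Bool) (n : ℕ) : Bool :=
  if n = 0 then false
  else
    decide ((∑ i ∈ Finset.range (Nat.log 2 n),
      boolToZMod2 (A i) * boolToZMod2 ((n - 2 ^ Nat.log 2 n).testBit i)) = 1)


namespace WHP
open Nat.Partrec (Code)
open Nat.Partrec.Code

def bsum (f : ℕ → ℕ) : ℕ → ℕ
  | 0 => 0
  | n + 1 => bsum f n + f n

theorem bsum_eq (f : ℕ → ℕ) : ∀ n, bsum f n = ∑ i ∈ Finset.range n, f i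
  | 0 => rfl
  | n + 1 => by rw [Finset.sum_range_succ, ← bsum_eq f n]; rfl

theorem primrec_bsum {α} [Primcodable α] {f : α → ℕ → ℕ} {g : α → ℕ}
    (hf : Primrec₂ f) (hg : Primrec g) : Primrec fun a => bsum (f a) (g a) := by
  have h : Primrec₂ fun (a : α) (p : ℕ × ℕ) => p.2 + f a p.1 :=
    Primrec.nat_add.comp (Primrec.snd.comp Primrec.snd)
      (hf.comp Primrec.fst (Primrec.fst.comp Primrec.snd))
  exact (Primrec.nat_rec' hg (Primrec.const 0) h).of_eq fun a => by
    generalize g a = n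
    induction n with
    | zero => rfl
    | succ n ih => simp only [bsum, ← ih]

def hval (c : Code) (t n : ℕ) : ℕ := Encodable.encode (evaln t c n)

def ip (k a j : ℕ) : ℕ := bsum (fun i => a / 2 ^ i % 2 * (j / 2 ^ i % 2)) k % 2

def viol (c : Code) (t k a : ℕ) : ℕ :=
  bsum (fun j => if hval c t (2 ^ k + j) = 0 ∨ hval c t (2 ^ k + j) = ip k a j + 1 then 0 else 1)
    (2 ^ k)

def cnt (c : Code) (k t m σ : ℕ) : ℕ :=
  bsum (fun a => if viol c t k a = 0 ∧ a % 2 ^ m = σ then 1 else 0) (2 ^ k)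

def scnt (c : Code) (k t : ℕ) : ℕ :=
  bsum (fun j => if hval c t (2 ^ k + j) = 0 then 0 else 1) (2 ^ k)

def chk (c : Code) (p1 p2 p3 : ℕ) (ℓ w : ℕ) : ℕ :=
  (if ℓ ≤ w.unpair.1.unpair.1 ∧ w.unpair.2 < 2 ^ ℓ ∧ w.unpair.2 % 2 ^ p1 = p2 then 0 else 1)
  + bsum (fun j => if j < p1 ∨ ℓ < j ∨
      cnt c w.unpair.1.unpair.1 w.unpair.1.unpair.2 j (w.unpair.2 % 2 ^ j) = p3 then 0 else 1)
    (ℓ + 1)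

def aenc (A : ℕ → Bool) : ℕ → ℕ
  | 0 => 0
  | k + 1 => aenc A k + if A k then 2 ^ k else 0

section primrec
open Primrec

theorem ppow : Primrec₂ ((· ^ ·) : ℕ → ℕ → ℕ) := Primrec₂.unpaired'.1 Nat.Primrec.pow

theorem primrec_pow2 : Primrec (fun k : ℕ => 2 ^ k) := ppow.comp (const 2) Primrec.id

theorem primrec_hval (c : Code) : Primrec₂ (hval c) :=
  Primrec.encode.comp (primrec_evaln.comp ((fst.pair (const c)).pair snd))

-- bit x i = x / 2^i % 2, as a Primrec₂-style helper
theorem primrec_bit : Primrec₂ (fun x i : ℕ => x / 2 ^ i % 2) :=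
  nat_mod.comp (nat_div.comp fst (primrec_pow2.comp snd)) (const 2)

theorem primrec_ip : Primrec (fun q : (ℕ × ℕ) × ℕ => ip q.1.1 q.1.2 q.2) := by
  have hf : Primrec₂ fun (q : (ℕ × ℕ) × ℕ) (i : ℕ) =>
      q.1.2 / 2 ^ i % 2 * (q.2 / 2 ^ i % 2) :=
    nat_mul.comp (primrec_bit.comp (snd.comp (fst.comp fst)) snd)
      (primrec_bit.comp (snd.comp fst) snd)
  exact (nat_mod.comp (primrec_bsum hf (fst.comp fst)) (const 2)).of_eq fun q => rfl

theorem primrec_viol (c : Code) : Primrec (fun q : (ℕ × ℕ) × ℕ => viol c q.1.1 q.1.2 q.2) := by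
  -- q = ((t, k), a)
  have hf : Primrec₂ fun (q : (ℕ × ℕ) × ℕ) (j : ℕ) =>
      if hval c q.1.1 (2 ^ q.1.2 + j) = 0 ∨ hval c q.1.1 (2 ^ q.1.2 + j) = ip q.1.2 q.2 j + 1
      then 0 else 1 := by
    have harg : Primrec fun (p : ((ℕ × ℕ) × ℕ) × ℕ) => (2 : ℕ) ^ p.1.1.2 + p.2 :=
      nat_add.comp (primrec_pow2.comp (snd.comp (fst.comp fst))) snd
    have hv : Primrec fun (p : ((ℕ × ℕ) × ℕ) × ℕ) => hval c p.1.1.1 (2 ^ p.1.1.2 + p.2) :=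
      (primrec_hval c).comp (fst.comp (fst.comp fst)) harg
    have hip : Primrec fun (p : ((ℕ × ℕ) × ℕ) × ℕ) => ip p.1.1.2 p.1.2 p.2 :=
      primrec_ip.comp (((snd.comp (fst.comp fst)).pair (snd.comp fst)).pair snd)
    exact Primrec.ite
      ((PrimrecPred.or (Primrec.eq.comp hv (const 0))
        (Primrec.eq.comp hv (Primrec.succ.comp hip)))) (const 0) (const 1)
  exact primrec_bsum hf (primrec_pow2.comp (snd.comp fst))

theorem primrec_cnt (c : Code) :
    Primrec (fun q : ((ℕ × ℕ) × ℕ) × ℕ => cnt c q.1.1.1 q.1.1.2 q.1.2 q.2) := by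
  -- q = (((k, t), m), σ)
  have hf : Primrec₂ fun (q : ((ℕ × ℕ) × ℕ) × ℕ) (a : ℕ) =>
      if viol c q.1.1.2 q.1.1.1 a = 0 ∧ a % 2 ^ q.1.2 = q.2 then 1 else 0 := by
    have hv : Primrec fun (p : (((ℕ × ℕ) × ℕ) × ℕ) × ℕ) => viol c p.1.1.1.2 p.1.1.1.1 p.2 :=
      (primrec_viol c).comp
        (((snd.comp (fst.comp (fst.comp fst))).pair (fst.comp (fst.comp (fst.comp fst)))).pair snd)
    have hm : Primrec fun (p : (((ℕ × ℕ) × ℕ) × ℕ) × ℕ) => p.2 % 2 ^ p.1.1.2 :=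
      nat_mod.comp snd (primrec_pow2.comp (snd.comp (fst.comp fst)))
    exact Primrec.ite
      (PrimrecPred.and (Primrec.eq.comp hv (const 0)) (Primrec.eq.comp hm (snd.comp fst)))
      (const 1) (const 0)
  exact primrec_bsum hf (primrec_pow2.comp (fst.comp (fst.comp fst)))

theorem primrec_chk (c : Code) (p1 p2 p3 : ℕ) : Primrec₂ (chk c p1 p2 p3) := by
  -- pair (ℓ, w)
  have hk : Primrec fun (q : ℕ × ℕ) => q.2.unpair.1.unpair.1 :=
    fst.comp (Primrec.unpair.comp (fst.comp (Primrec.unpair.comp snd)))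
  have ht : Primrec fun (q : ℕ × ℕ) => q.2.unpair.1.unpair.2 :=
    snd.comp (Primrec.unpair.comp (fst.comp (Primrec.unpair.comp snd)))
  have hτ : Primrec fun (q : ℕ × ℕ) => q.2.unpair.2 :=
    snd.comp (Primrec.unpair.comp snd)
  have h1 : Primrec fun (q : ℕ × ℕ) =>
      if q.1 ≤ q.2.unpair.1.unpair.1 ∧ q.2.unpair.2 < 2 ^ q.1 ∧
          q.2.unpair.2 % 2 ^ p1 = p2 then (0:ℕ) else 1 :=
    Primrec.ite (PrimrecPred.and (nat_le.comp fst hk)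
      (PrimrecPred.and (nat_lt.comp hτ (primrec_pow2.comp fst))
        (Primrec.eq.comp (nat_mod.comp hτ (const (2 ^ p1))) (const p2))))
      (const 0) (const 1)
  have hf : Primrec₂ fun (q : ℕ × ℕ) (j : ℕ) =>
      if j < p1 ∨ q.1 < j ∨
        cnt c q.2.unpair.1.unpair.1 q.2.unpair.1.unpair.2 j (q.2.unpair.2 % 2 ^ j) = p3
      then (0:ℕ) else 1 := by
    have hc : Primrec fun (p : (ℕ × ℕ) × ℕ) =>
        cnt c p.1.2.unpair.1.unpair.1 p.1.2.unpair.1.unpair.2 p.2 (p.1.2.unpair.2 % 2 ^ p.2) :=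
      (primrec_cnt c).comp
        ((((hk.comp fst).pair (ht.comp fst)).pair snd).pair
          (nat_mod.comp (hτ.comp fst) (primrec_pow2.comp snd)))
    exact Primrec.ite (PrimrecPred.or (nat_lt.comp snd (const p1))
      (PrimrecPred.or (nat_lt.comp (fst.comp fst) snd) (Primrec.eq.comp hc (const p3))))
      (const 0) (const 1)
  exact (nat_add.comp h1 (primrec_bsum hf (Primrec.succ.comp fst))).to₂


end primrec

/-! ### Math bridges -/

theorem bsum_indicator (P : ℕ → Prop) [DecidablePred P] (n : ℕ) :
    bsum (fun x => if P x then 1 else 0) n = ((Finset.range n).filter P).card := by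
  rw [bsum_eq, Finset.card_filter]

theorem bit_eq (x i : ℕ) : x / 2 ^ i % 2 = if x.testBit i then 1 else 0 := by
  rw [Nat.testBit_eq_decide_div_mod_eq]
  rcases Nat.mod_two_eq_zero_or_one (x / 2 ^ i) with h | h <;> simp [h]

def ips (k a j : ℕ) : ℕ := ∑ i ∈ Finset.range k, if a.testBit i && j.testBit i then 1 else 0

def chi (k a j : ℕ) : ℤ := ∏ i ∈ Finset.range k, if a.testBit i && j.testBit i then -1 else 1

theorem ip_eq_ips (k a j : ℕ) : ip k a j = ips k a j % 2 := by
  unfold ip ips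
  rw [bsum_eq]
  congr 1
  refine Finset.sum_congr rfl fun i _ => ?_
  rw [bit_eq, bit_eq]
  cases ha : a.testBit i <;> cases hj : j.testBit i <;> simp

theorem chi_eq_pow (k a j : ℕ) : chi k a j = (-1) ^ ips k a j := by
  unfold chi ips
  rw [← Finset.prod_pow_eq_pow_sum]
  refine Finset.prod_congr rfl fun i _ => ?_
  cases ha : a.testBit i && j.testBit i <;> simp

theorem chi_parity {k a a' j : ℕ} (h : ips k a j % 2 = ips k a' j % 2) :
    chi k a j = chi k a' j := by
  rw [chi_eq_pow, chi_eq_pow]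
  rcases Nat.even_or_odd (ips k a j) with he | ho
  · have he' : Even (ips k a' j) := by
      rw [Nat.even_iff] at he ⊢; omega
    rw [he.neg_one_pow, he'.neg_one_pow]
  · have ho' : Odd (ips k a' j) := by
      rw [Nat.odd_iff] at ho ⊢; omega
    rw [ho.neg_one_pow, ho'.neg_one_pow]

theorem chi_sq (k a j : ℕ) : chi k a j * chi k a j = 1 := by
  rw [chi_eq_pow, ← pow_add]
  exact Even.neg_one_pow ⟨ips k a j, by ring⟩

theorem chi_mul (k a a' j : ℕ) : chi k a j * chi k a' j = chi k (a ^^^ a') j := by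
  unfold chi
  rw [← Finset.prod_mul_distrib]
  refine Finset.prod_congr rfl fun i _ => ?_
  rw [Nat.testBit_xor]
  cases ha : a.testBit i <;> cases ha' : a'.testBit i <;> cases hj : j.testBit i <;> simp

theorem chi_zero (k j : ℕ) : chi k 0 j = 1 := by
  unfold chi
  refine Finset.prod_eq_one fun i _ => by simp [Nat.zero_testBit]

theorem chi_flip {k d i : ℕ} (hd : d.testBit i = true) (hik : i < k) (j : ℕ) :
    chi k d (j ^^^ 2 ^ i) = -chi k d j := by
  unfold chi
  have hmem : i ∈ Finset.range k := Finset.mem_range.2 hik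
  rw [← Finset.mul_prod_erase _ _ hmem, ← Finset.mul_prod_erase _
    (fun i' => if d.testBit i' && j.testBit i' then (-1 : ℤ) else 1) hmem]
  have hrest : ∀ i' ∈ (Finset.range k).erase i,
      (if d.testBit i' && (j ^^^ 2 ^ i).testBit i' then (-1 : ℤ) else 1)
        = if d.testBit i' && j.testBit i' then (-1 : ℤ) else 1 := by
    intro i' hi'
    have hne : i ≠ i' := fun h => (Finset.mem_erase.1 hi').1 h.symm
    rw [Nat.testBit_xor, Nat.testBit_two_pow_of_ne hne]
    simp
  rw [Finset.prod_congr rfl hrest]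
  have hbit : (j ^^^ 2 ^ i).testBit i = !j.testBit i := by
    rw [Nat.testBit_xor, Nat.testBit_two_pow_self]
    cases hj : j.testBit i <;> simp
  rw [hbit, hd]
  cases hj : j.testBit i <;> simp <;> ring

theorem chi_sum {k d : ℕ} (hdk : d < 2 ^ k) (hd : d ≠ 0) :
    ∑ j ∈ Finset.range (2 ^ k), chi k d j = 0 := by
  obtain ⟨i, hi⟩ : ∃ i, d.testBit i = true := by
    by_contra h
    push_neg at h
    exact hd (Nat.zero_of_testBit_eq_false fun i => by
      have := h i
      simpa using this)
  have hik : i < k := by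
    by_contra hik
    push_neg at hik
    have : d < 2 ^ i := lt_of_lt_of_le hdk (Nat.pow_le_pow_right (by norm_num) hik)
    rw [Nat.testBit_eq_false_of_lt this] at hi
    exact Bool.false_ne_true hi
  refine Finset.sum_involution (fun j _ => j ^^^ 2 ^ i) ?_ ?_ ?_ ?_
  · intro j _
    rw [chi_flip hi hik]
    ring
  · intro j _ hj h
    have hb : (j ^^^ 2 ^ i).testBit i = j.testBit i := by
      simp only [h]
    rw [Nat.testBit_xor, Nat.testBit_two_pow_self] at hb
    cases hjb : j.testBit i <;> rw [hjb] at hb <;> simp at hb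
  · intro j hj
    refine Finset.mem_range.2 (Nat.xor_lt_two_pow (Finset.mem_range.1 hj) ?_)
    exact Nat.pow_lt_pow_right (by norm_num) hik
  · intro j _
    simp [Nat.xor_assoc, Nat.xor_self]

theorem key_bound {k : ℕ} (S L : Finset ℕ) (hS : S ⊆ Finset.range (2 ^ k))
    (hL : L ⊆ Finset.range (2 ^ k))
    (hagree : ∀ a ∈ L, ∀ a' ∈ L, ∀ j ∈ S, chi k a j = chi k a' j) :
    L.card * S.card ≤ 2 ^ k := by
  rcases L.eq_empty_or_nonempty with rfl | ⟨a₀, ha₀⟩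
  · simp
  set r := L.card with hr
  have hrpos : 0 < r := Finset.card_pos.2 ⟨a₀, ha₀⟩
  -- total sum of squares
  have htot : ∑ j ∈ Finset.range (2 ^ k), (∑ a ∈ L, chi k a j) * (∑ a ∈ L, chi k a j)
      = (r : ℤ) * 2 ^ k := by
    have h1 : ∀ j, (∑ a ∈ L, chi k a j) * (∑ a ∈ L, chi k a j)
        = ∑ a ∈ L, ∑ a' ∈ L, chi k a j * chi k a' j := fun j => Finset.sum_mul_sum L L _ _
    rw [Finset.sum_congr rfl fun j _ => h1 j]
    rw [Finset.sum_comm]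
    have h2 : ∀ a ∈ L, ∑ j ∈ Finset.range (2 ^ k), ∑ a' ∈ L, chi k a j * chi k a' j
        = (2 : ℤ) ^ k := by
      intro a ha
      rw [Finset.sum_comm]
      have h3 : ∀ a' ∈ L, ∑ j ∈ Finset.range (2 ^ k), chi k a j * chi k a' j
          = if a' = a then (2 : ℤ) ^ k else 0 := by
        intro a' ha'
        by_cases hne : a' = a
        · subst hne
          simp only [if_pos rfl]
          rw [Finset.sum_congr rfl fun j _ => chi_sq k a' j]
          simp
        · rw [if_neg hne]
          rw [Finset.sum_congr rfl fun j _ => chi_mul k a a' j]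
          refine chi_sum ?_ ?_
          · exact Nat.xor_lt_two_pow (Finset.mem_range.1 (hL ha)) (Finset.mem_range.1 (hL ha'))
          · intro h
            exact hne (show a = a' by simpa [Nat.xor_assoc] using congrArg (· ^^^ a') h).symm
      rw [Finset.sum_congr rfl h3]
      simp [Finset.sum_ite_eq' L a fun _ => (2:ℤ)^k, ha]
    rw [Finset.sum_congr rfl h2]
    simp [mul_comm]
    exact hr.symm
  -- sum over S
  have hSsum : ∑ j ∈ S, (∑ a ∈ L, chi k a j) * (∑ a ∈ L, chi k a j)
      = (r : ℤ) * r * S.card := by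
    have h1 : ∀ j ∈ S, (∑ a ∈ L, chi k a j) = (r : ℤ) * chi k a₀ j := by
      intro j hj
      rw [Finset.sum_congr rfl fun a ha => hagree a ha a₀ ha₀ j hj]
      simp [mul_comm]
      exact Or.inl hr.symm
    rw [Finset.sum_congr rfl fun j hj => by rw [h1 j hj]]
    have : ∀ j ∈ S, (r : ℤ) * chi k a₀ j * ((r:ℤ) * chi k a₀ j) = (r:ℤ) * r := by
      intro j _
      rw [mul_mul_mul_comm, chi_sq k a₀ j, mul_one]
    rw [Finset.sum_congr rfl this]
    simp [mul_comm, Finset.sum_const, nsmul_eq_mul]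
  have hle : ((r : ℤ) * r) * S.card ≤ (r : ℤ) * 2 ^ k := by
    rw [← hSsum, ← htot]
    refine Finset.sum_le_sum_of_subset_of_nonneg hS fun j _ _ => mul_self_nonneg _
  have : (r : ℤ) * (r * S.card) ≤ (r : ℤ) * 2 ^ k := by linarith [hle]
  have h4 : (r : ℤ) * S.card ≤ 2 ^ k :=
    le_of_mul_le_mul_left this (by exact_mod_cast hrpos)
  exact_mod_cast h4


/-! ### Lemmas about the counting functions -/

theorem hval_eq_succ_iff {c : Code} {t n v : ℕ} :
    hval c t n = v + 1 ↔ evaln t c n = some v := by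
  unfold hval
  cases h : evaln t c n with
  | none => simp [Encodable.encode]
  | some w =>
    show Encodable.encode (some w) = v + 1 ↔ _
    simp only [Encodable.encode_some, Encodable.encode_nat, Option.some.injEq, Nat.succ.injEq]

theorem hval_zero_iff {c : Code} {t n : ℕ} :
    hval c t n = 0 ↔ evaln t c n = none := by
  unfold hval
  cases h : evaln t c n with
  | none => simp
  | some w => simp [Encodable.encode_some]

theorem viol_eq_zero_iff (c : Code) (t k a : ℕ) :
    viol c t k a = 0 ↔
      ∀ j < 2 ^ k, hval c t (2 ^ k + j) ≠ 0 → hval c t (2 ^ k + j) = ip k a j + 1 := by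
  unfold viol
  rw [bsum_eq, Finset.sum_eq_zero_iff]
  constructor
  · intro h j hj hne
    have := h j (Finset.mem_range.2 hj)
    by_contra hne2
    simp [hne, hne2] at this
  · intro h j hj
    rcases eq_or_ne (hval c t (2 ^ k + j)) 0 with h0 | h0
    · simp [h0]
    · simp [h0, h j (Finset.mem_range.1 hj) h0]

theorem cnt_eq_card (c : Code) (k t m σ : ℕ) :
    cnt c k t m σ =
      ((Finset.range (2 ^ k)).filter fun a => viol c t k a = 0 ∧ a % 2 ^ m = σ).card :=
  bsum_indicator _ _

theorem scnt_eq_card (c : Code) (k t : ℕ) :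
    scnt c k t =
      ((Finset.range (2 ^ k)).filter fun j => hval c t (2 ^ k + j) ≠ 0).card := by
  unfold scnt
  rw [← bsum_indicator]
  congr 1
  funext j
  by_cases h : hval c t (2 ^ k + j) = 0 <;> simp [h]

theorem cnt_le_of_good {c : Code} {k t C : ℕ} (h : 2 ^ k ≤ C * scnt c k t) (m σ : ℕ) :
    cnt c k t m σ ≤ C := by
  set S := (Finset.range (2 ^ k)).filter fun j => hval c t (2 ^ k + j) ≠ 0 with hSdef
  set L := (Finset.range (2 ^ k)).filter (fun a => viol c t k a = 0 ∧ a % 2 ^ m = σ) with hLdef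
  have hkey : L.card * S.card ≤ 2 ^ k := by
    refine key_bound S L (Finset.filter_subset _ _) (Finset.filter_subset _ _) ?_
    intro a ha a' ha' j hj
    have hja : j < 2 ^ k := Finset.mem_range.1 (Finset.filter_subset _ _ hj)
    have hjh : hval c t (2 ^ k + j) ≠ 0 := (Finset.mem_filter.1 hj).2
    have hva : viol c t k a = 0 := ((Finset.mem_filter.1 ha).2).1
    have hva' : viol c t k a' = 0 := ((Finset.mem_filter.1 ha').2).1
    have e1 := (viol_eq_zero_iff c t k a).1 hva j hja hjh
    have e2 := (viol_eq_zero_iff c t k a').1 hva' j hja hjh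
    refine chi_parity ?_
    have : ip k a j = ip k a' j := by omega
    rw [ip_eq_ips, ip_eq_ips] at this
    exact this
  have hSpos : 0 < S.card := by
    rcases Nat.eq_zero_or_pos S.card with h0 | h0
    · rw [scnt_eq_card, ← hSdef, h0, Nat.mul_zero] at h
      have := Nat.pow_pos (n := k) (by norm_num : 0 < 2)
      omega
    · exact h0
  rw [scnt_eq_card, ← hSdef] at h
  have : L.card * S.card ≤ C * S.card := le_trans hkey h
  have hLC : L.card ≤ C := Nat.le_of_mul_le_mul_right this hSpos
  rw [cnt_eq_card, ← hLdef]
  exact hLC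

theorem cnt_prefix (c : Code) (k t : ℕ) {m m' : ℕ} (h : m ≤ m') (σ' : ℕ) :
    cnt c k t m' σ' ≤ cnt c k t m (σ' % 2 ^ m) := by
  rw [cnt_eq_card, cnt_eq_card]
  refine Finset.card_le_card ?_
  intro a ha
  rw [Finset.mem_filter] at ha ⊢
  refine ⟨ha.1, ha.2.1, ?_⟩
  rw [← ha.2.2, Nat.mod_mod_of_dvd a (pow_dvd_pow 2 h)]

theorem cnt_partition (c : Code) (k t : ℕ) {m σ : ℕ} (hσ : σ < 2 ^ m) :
    cnt c k t m σ = cnt c k t (m + 1) σ + cnt c k t (m + 1) (σ + 2 ^ m) := by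
  classical
  have h1 : ((Finset.range (2 ^ k)).filter fun a => viol c t k a = 0 ∧ a % 2 ^ m = σ).filter
      (fun a => a % 2 ^ (m + 1) = σ)
      = (Finset.range (2 ^ k)).filter fun a => viol c t k a = 0 ∧ a % 2 ^ (m + 1) = σ := by
    rw [Finset.filter_filter]
    refine Finset.filter_congr fun a _ => ?_
    constructor
    · rintro ⟨⟨hv, _⟩, hm1⟩
      exact ⟨hv, hm1⟩
    · rintro ⟨hv, hm1⟩
      refine ⟨⟨hv, ?_⟩, hm1⟩
      have h2 : a % 2 ^ (m + 1) % 2 ^ m = σ % 2 ^ m := by rw [hm1]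
      rwa [Nat.mod_mod_of_dvd a (pow_dvd_pow 2 m.le_succ), Nat.mod_eq_of_lt hσ] at h2
  have h2 : ((Finset.range (2 ^ k)).filter fun a => viol c t k a = 0 ∧ a % 2 ^ m = σ).filter
      (fun a => ¬a % 2 ^ (m + 1) = σ)
      = (Finset.range (2 ^ k)).filter fun a => viol c t k a = 0 ∧ a % 2 ^ (m + 1) = σ + 2 ^ m := by
    rw [Finset.filter_filter]
    refine Finset.filter_congr fun a _ => ?_
    constructor
    · rintro ⟨⟨hv, hm⟩, hne⟩
      refine ⟨hv, ?_⟩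
      have hsplit := Nat.mod_pow_succ (x := a) (b := 2) (k := m)
      rcases Nat.mod_two_eq_zero_or_one (a / 2 ^ m) with hb | hb
      · rw [hb, Nat.mul_zero, Nat.add_zero, hm] at hsplit
        exact absurd hsplit hne
      · rw [hb, Nat.mul_one, hm] at hsplit
        exact hsplit
    · rintro ⟨hv, hm1⟩
      have hmod : a % 2 ^ m = σ := by
        have h3 : a % 2 ^ (m + 1) % 2 ^ m = (σ + 2 ^ m) % 2 ^ m := by rw [hm1]
        rwa [Nat.mod_mod_of_dvd a (pow_dvd_pow 2 m.le_succ), Nat.add_mod_right,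
          Nat.mod_eq_of_lt hσ] at h3
      have hne : ¬a % 2 ^ (m + 1) = σ := by
        rw [hm1]
        have := Nat.pow_pos (n := m) (by norm_num : 0 < 2)
        omega
      exact ⟨⟨hv, hmod⟩, hne⟩
  have h3 := Finset.card_filter_add_card_filter_not
    (s := (Finset.range (2 ^ k)).filter fun a => viol c t k a = 0 ∧ a % 2 ^ m = σ)
    (p := fun a => a % 2 ^ (m + 1) = σ)
  rw [h1, h2] at h3
  rw [cnt_eq_card, cnt_eq_card, cnt_eq_card, ← h3]

theorem hval_mono {c : Code} {t t' n : ℕ} (h : t ≤ t') (hne : hval c t n ≠ 0) :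
    hval c t' n = hval c t n := by
  cases he : evaln t c n with
  | none => exact absurd (hval_zero_iff.2 he) hne
  | some v =>
    have h1 : hval c t n = v + 1 := hval_eq_succ_iff.2 he
    have h2 : v ∈ evaln t' c n := evaln_mono h (by rw [he]; rfl)
    have h3 : evaln t' c n = some v := h2
    rw [h1, hval_eq_succ_iff.2 h3]

/-! ### `aenc` -/

theorem aenc_lt (A : ℕ → Bool) : ∀ k, aenc A k < 2 ^ k
  | 0 => by simp [aenc]
  | k + 1 => by
    have := aenc_lt A k
    have h2 : (if A k then 2 ^ k else 0) ≤ 2 ^ k := by split <;> simp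
    have : aenc A (k + 1) < 2 ^ k + 2 ^ k := by
      unfold aenc; omega
    simpa [pow_succ, Nat.mul_two] using this

theorem aenc_mod (A : ℕ → Bool) {m k : ℕ} (h : m ≤ k) : aenc A k % 2 ^ m = aenc A m := by
  induction k with
  | zero =>
    have : m = 0 := Nat.le_zero.1 h
    subst this
    simp [aenc]
  | succ k ih =>
    rcases Nat.lt_or_ge m (k + 1) with hm | hm
    · have hmk : m ≤ k := by omega
      show (aenc A k + if A k then 2 ^ k else 0) % 2 ^ m = aenc A m
      obtain ⟨e, he⟩ : (2:ℕ) ^ m ∣ (if A k then 2 ^ k else 0) := by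
        split
        · exact pow_dvd_pow 2 hmk
        · exact dvd_zero _
      rw [he, Nat.mul_comm, Nat.add_mul_mod_self_right]
      exact ih hmk
    · have : m = k + 1 := by omega
      subst this
      exact Nat.mod_eq_of_lt (aenc_lt A (k + 1))

theorem aenc_bit (A : ℕ → Bool) {i k : ℕ} (h : i < k) :
    aenc A k / 2 ^ i % 2 = if A i then 1 else 0 := by
  induction k with
  | zero => omega
  | succ k ih =>
    rcases Nat.lt_or_ge i k with hik | hik
    · show (aenc A k + if A k then 2 ^ k else 0) / 2 ^ i % 2 = _
      obtain ⟨e, he, heven⟩ : ∃ e, (if A k then 2 ^ k else 0) = 2 ^ i * e ∧ e % 2 = 0 := by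
        refine ⟨if A k then 2 ^ (k - i) else 0, ?_, ?_⟩
        · split
          · rw [← pow_add]
            congr 1
            omega
          · simp
        · split
          · have : k - i = (k - i - 1) + 1 := by omega
            rw [this, pow_succ]
            simp [Nat.mul_mod_left]
          · simp
      rw [he, Nat.add_mul_div_left _ _ (by positivity)]
      rw [Nat.add_mod, heven]
      rw [Nat.add_zero, Nat.mod_mod_of_dvd _ (dvd_refl 2)]
      exact ih hik
    · have : i = k := by omega
      subst this
      show (aenc A i + if A i then 2 ^ i else 0) / 2 ^ i % 2 = _
      have hlt := aenc_lt A i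
      split
      · rw [Nat.add_div_right _ (by positivity), Nat.div_eq_of_lt hlt]
      · rw [Nat.add_zero, Nat.div_eq_of_lt hlt]

theorem chk_eq_zero_iff (c : Code) (p1 p2 p3 ℓ w : ℕ) :
    chk c p1 p2 p3 ℓ w = 0 ↔
      ((ℓ ≤ w.unpair.1.unpair.1 ∧ w.unpair.2 < 2 ^ ℓ ∧ w.unpair.2 % 2 ^ p1 = p2) ∧
        ∀ j, p1 ≤ j → j ≤ ℓ →
          cnt c w.unpair.1.unpair.1 w.unpair.1.unpair.2 j (w.unpair.2 % 2 ^ j) = p3) := by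
  unfold chk
  rw [Nat.add_eq_zero, bsum_eq, Finset.sum_eq_zero_iff]
  constructor
  · rintro ⟨h1, h2⟩
    constructor
    · by_contra hc
      simp only [if_neg hc] at h1
      omega
    · intro j hj1 hj2
      have := h2 j (Finset.mem_range.2 (by omega))
      by_contra hc
      rw [if_neg (by push_neg; exact ⟨by omega, by omega, hc⟩)] at this
      exact one_ne_zero this
  · rintro ⟨h1, h2⟩
    refine ⟨by simp [if_pos h1], ?_⟩
    intro j hj
    rcases Nat.lt_or_ge j p1 with hj1 | hj1
    · simp [hj1]
    rcases Nat.lt_or_ge ℓ j with hj2 | hj2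
    · simp [hj2]
    · simp [h2 j hj1 hj2]


/-! ### Density argument -/

noncomputable abbrev upperDensityX (D : Set ℕ) : ℝ := upperDensity D

theorem sum_range_two_pow (n : ℕ) : ∑ i ∈ Finset.range n, 2 ^ i = 2 ^ n - 1 := by
  induction n with
  | zero => simp
  | succ n ih =>
    rw [Finset.sum_range_succ, ih]
    have := Nat.pow_pos (n := n) (by norm_num : 0 < 2)
    rw [pow_succ]
    omega

theorem count_mono (D : Set ℕ) {a b : ℕ} (h : a ≤ b) :
    (D ∩ Set.Iio a).ncard ≤ (D ∩ Set.Iio b).ncard := by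
  refine Set.ncard_le_ncard (Set.inter_subset_inter_right D (Set.Iio_subset_Iio h)) ?_
  exact (Set.finite_Iio b).inter_of_right D

theorem count_le_self (D : Set ℕ) (n : ℕ) : (D ∩ Set.Iio n).ncard ≤ n := by
  calc (D ∩ Set.Iio n).ncard ≤ (Set.Iio n).ncard :=
        Set.ncard_le_ncard Set.inter_subset_right (Set.finite_Iio n)
    _ = n := by rw [← Finset.coe_Iio, Set.ncard_coe_finset, Nat.card_Iio]

theorem block_ncard (D : Set ℕ) [DecidablePred (· ∈ D)] (j : ℕ) :
    (D ∩ Set.Ico (2 ^ j) (2 ^ (j + 1))).ncard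
      = ((Finset.range (2 ^ j)).filter fun i => (2 ^ j + i) ∈ D).card := by
  have himg : D ∩ Set.Ico (2 ^ j) (2 ^ (j + 1))
      = (fun i => 2 ^ j + i) '' ↑((Finset.range (2 ^ j)).filter fun i => (2 ^ j + i) ∈ D) := by
    ext x
    simp only [Set.mem_inter_iff, Set.mem_Ico, Set.mem_image, Finset.coe_filter,
      Finset.mem_range, Set.mem_setOf_eq]
    constructor
    · rintro ⟨hxD, hx1, hx2⟩
      refine ⟨x - 2 ^ j, ⟨?_, ?_⟩, ?_⟩
      · have : (2:ℕ) ^ (j + 1) = 2 ^ j + 2 ^ j := by rw [pow_succ]; omega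
        omega
      · have : 2 ^ j + (x - 2 ^ j) = x := by omega
        rwa [this]
      · omega
    · rintro ⟨i, ⟨hi, hiD⟩, rfl⟩
      refine ⟨hiD, by omega, ?_⟩
      have : (2:ℕ) ^ (j + 1) = 2 ^ j + 2 ^ j := by rw [pow_succ]; omega
      omega
  rw [himg, Set.ncard_image_of_injective _ (add_right_injective (2 ^ j)),
    Set.ncard_coe_finset]

theorem count_pow_le (D : Set ℕ) [DecidablePred (· ∈ D)] (k₀ : ℕ) :
    ∀ M, k₀ ≤ M → (D ∩ Set.Iio (2 ^ M)).ncard ≤ 2 ^ k₀ +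
      ∑ j ∈ Finset.Ico k₀ M, ((Finset.range (2 ^ j)).filter fun i => (2 ^ j + i) ∈ D).card := by
  refine Nat.le_induction ?_ ?_
  · simpa using count_le_self D (2 ^ k₀)
  · intro M hM ih
    have hsplit : D ∩ Set.Iio (2 ^ (M + 1))
        = (D ∩ Set.Iio (2 ^ M)) ∪ (D ∩ Set.Ico (2 ^ M) (2 ^ (M + 1))) := by
      rw [← Set.inter_union_distrib_left]
      rw [Set.Iio_union_Ico_eq_Iio (Nat.pow_le_pow_right (by norm_num) (Nat.le_succ M))]
    calc (D ∩ Set.Iio (2 ^ (M + 1))).ncard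
        ≤ (D ∩ Set.Iio (2 ^ M)).ncard + (D ∩ Set.Ico (2 ^ M) (2 ^ (M + 1))).ncard := by
          rw [hsplit]
          exact Set.ncard_union_le _ _
      _ ≤ 2 ^ k₀ + ∑ j ∈ Finset.Ico k₀ M, ((Finset.range (2 ^ j)).filter
            fun i => (2 ^ j + i) ∈ D).card
          + ((Finset.range (2 ^ M)).filter fun i => (2 ^ M + i) ∈ D).card := by
          rw [block_ncard]
          omega
      _ = _ := by
          rw [Finset.sum_Ico_succ_top hM]
          omega

theorem density_blocks (D : Set ℕ) [DecidablePred (· ∈ D)] (hρ : 0 < upperDensity D) :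
    ∃ C : ℕ, 0 < C ∧ ∀ k₀, ∃ k, k₀ ≤ k ∧
      2 ^ k ≤ C * ((Finset.range (2 ^ k)).filter fun j => (2 ^ k + j) ∈ D).card := by
  classical
  set u : ℕ → ℝ := fun n => (Nat.card (D ∩ Set.Iio n : Set ℕ) : ℝ) / n with hu
  set ε : ℝ := upperDensity D / 2 with hε
  have hε0 : 0 < ε := by positivity
  have hfreq : ∃ᶠ n in Filter.atTop, ε < u n := by
    refine Filter.frequently_lt_of_lt_limsup ?_ ?_
    · refine Filter.IsBoundedUnder.isCoboundedUnder_le ?_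
      refine Filter.isBoundedUnder_of ⟨0, fun n => ?_⟩
      simp only [hu]
      positivity
    · rw [hε]
      exact half_lt_self hρ
  set C : ℕ := ⌈4 / ε⌉₊ + 1 with hC
  refine ⟨C, by positivity, fun k₀ => ?_⟩
  by_contra hcon
  push_neg at hcon
  -- hcon : ∀ k, k₀ ≤ k → C * card < 2 ^ k
  obtain ⟨n, hn1, hn2⟩ := (Filter.frequently_atTop.1 hfreq) (C * 2 ^ k₀ + 1)
  have hnpos : 0 < n := by
    have : 0 < C * 2 ^ k₀ + 1 := by positivity
    omega
  -- natural number chain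
  set K := Nat.log 2 n with hK
  have hnK : n < 2 ^ (K + 1) := Nat.lt_pow_succ_log_self (by norm_num) n
  have hKn : 2 ^ K ≤ n := Nat.pow_log_le_self 2 hnpos.ne'
  rcases Nat.lt_or_ge (K + 1) k₀ with hk₀K | hk₀K
  · -- n is small: n < 2 ^ (K+1) ≤ 2 ^ k₀ ≤ C * 2 ^ k₀
    have h1 : (2:ℕ) ^ (K + 1) ≤ 2 ^ k₀ := Nat.pow_le_pow_right (by norm_num) (by omega)
    have h2 : (2:ℕ) ^ k₀ ≤ C * 2 ^ k₀ := Nat.le_mul_of_pos_left _ (by positivity)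
    omega
  have hchain : C * (D ∩ Set.Iio n).ncard ≤ C * 2 ^ k₀ + 2 * n := by
    have h1 : (D ∩ Set.Iio n).ncard ≤ (D ∩ Set.Iio (2 ^ (K + 1))).ncard :=
      count_mono D (le_of_lt hnK)
    have h2 := count_pow_le D k₀ (K + 1) hk₀K
    have h3 : C * ∑ j ∈ Finset.Ico k₀ (K + 1),
        ((Finset.range (2 ^ j)).filter fun i => (2 ^ j + i) ∈ D).card ≤ 2 ^ (K + 1) := by
      rw [Finset.mul_sum]
      calc ∑ j ∈ Finset.Ico k₀ (K + 1),
            C * ((Finset.range (2 ^ j)).filter fun i => (2 ^ j + i) ∈ D).card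
          ≤ ∑ j ∈ Finset.Ico k₀ (K + 1), 2 ^ j := by
            refine Finset.sum_le_sum fun j hj => ?_
            exact le_of_lt (hcon j (Finset.mem_Ico.1 hj).1)
        _ ≤ ∑ j ∈ Finset.range (K + 1), 2 ^ j := by
            refine Finset.sum_le_sum_of_subset fun j hj => ?_
            rw [Finset.mem_range]
            exact (Finset.mem_Ico.1 hj).2
        _ ≤ 2 ^ (K + 1) := by rw [sum_range_two_pow]; omega
    have h4 : (2:ℕ) ^ (K + 1) ≤ 2 * n := by
      rw [pow_succ, Nat.mul_comm]
      exact Nat.mul_le_mul_left 2 hKn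
    calc C * (D ∩ Set.Iio n).ncard ≤ C * (D ∩ Set.Iio (2 ^ (K + 1))).ncard :=
          Nat.mul_le_mul_left C h1
      _ ≤ C * (2 ^ k₀ + ∑ j ∈ Finset.Ico k₀ (K + 1),
            ((Finset.range (2 ^ j)).filter fun i => (2 ^ j + i) ∈ D).card) :=
          Nat.mul_le_mul_left C h2
      _ = C * 2 ^ k₀ + C * ∑ j ∈ Finset.Ico k₀ (K + 1),
            ((Finset.range (2 ^ j)).filter fun i => (2 ^ j + i) ∈ D).card := by ring
      _ ≤ C * 2 ^ k₀ + 2 * n := by omega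
  -- real side
  have hcount : ε * n < ((D ∩ Set.Iio n).ncard : ℝ) := by
    have : ε < ((D ∩ Set.Iio n).ncard : ℝ) / n := by
      have h' := hn2
      simp only [hu] at h'
      rwa [Nat.card_coe_set_eq] at h'
    have hnR : (0:ℝ) < n := by exact_mod_cast hnpos
    calc ε * n < ((D ∩ Set.Iio n).ncard : ℝ) / n * n := by
          exact mul_lt_mul_of_pos_right this hnR
      _ = ((D ∩ Set.Iio n).ncard : ℝ) := by field_simp
  have hCe : (4:ℝ) ≤ C * ε := by
    have h1 : (4:ℝ) / ε ≤ (⌈4 / ε⌉₊ : ℝ) := Nat.le_ceil _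
    have h4 : (C:ℝ) = (⌈4 / ε⌉₊ : ℝ) + 1 := by rw [hC]; push_cast; ring
    have h5 : (4:ℝ) = 4 / ε * ε := by field_simp
    nlinarith [hε0]
  have hfin : (4:ℝ) * n ≤ (C:ℝ) * 2 ^ k₀ + 2 * n := by
    have h0 : (0:ℝ) ≤ n := by positivity
    calc (4:ℝ) * n ≤ (C * ε) * n := by nlinarith
      _ = (C:ℝ) * (ε * n) := by ring
      _ ≤ (C:ℝ) * ((D ∩ Set.Iio n).ncard : ℝ) := by
          refine mul_le_mul_of_nonneg_left hcount.le (by positivity)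
      _ ≤ (C:ℝ) * 2 ^ k₀ + 2 * n := by exact_mod_cast hchain
  have hnn : (n:ℝ) ≥ (C:ℝ) * 2 ^ k₀ + 1 := by exact_mod_cast hn1
  nlinarith
/-! ### Bridge to the Walsh–Hadamard encoding -/

theorem aenc_testBit (A : ℕ → Bool) {i k : ℕ} (h : i < k) :
    (aenc A k).testBit i = A i := by
  rw [Nat.testBit_eq_decide_div_mod_eq, aenc_bit A h]
  cases hA : A i <;> simp

theorem ip_aenc (A : ℕ → Bool) {k j : ℕ} (hj : j < 2 ^ k) :
    ip k (aenc A k) j = Encodable.encode (walshHadamard A (2 ^ k + j)) := by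
  have hn0 : 2 ^ k + j ≠ 0 := by positivity
  have hlog : Nat.log 2 (2 ^ k + j) = k :=
    Nat.log_eq_of_pow_le_of_lt_pow (by omega) (by rw [pow_succ]; omega)
  have hsub : 2 ^ k + j - 2 ^ k = j := by omega
  rw [walshHadamard, if_neg hn0, hlog, hsub]
  set s : ℕ := ∑ i ∈ Finset.range k, if A i && j.testBit i then 1 else 0 with hs
  have claim1 : ip k (aenc A k) j = s % 2 := by
    rw [ip_eq_ips]
    congr 1
    unfold ips
    refine Finset.sum_congr rfl fun i hi => ?_
    rw [aenc_testBit A (Finset.mem_range.1 hi)]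
  have claim2 : (∑ i ∈ Finset.range k,
      boolToZMod2 (A i) * boolToZMod2 (j.testBit i)) = (s : ZMod 2) := by
    rw [hs, Nat.cast_sum]
    refine Finset.sum_congr rfl fun i _ => ?_
    cases hA : A i <;> cases hb : j.testBit i <;> simp [boolToZMod2]
  rw [claim1, claim2]
  rcases Nat.mod_two_eq_zero_or_one s with h2 | h2
  · have : (s : ZMod 2) = 0 := by
      rw [← ZMod.natCast_mod s 2, h2]; rfl
    rw [this, h2]
    norm_num
  · have : (s : ZMod 2) = 1 := by
      rw [← ZMod.natCast_mod s 2, h2]; rfl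
    rw [this, h2]
    norm_num

end WHP

open WHP in
/-- If `A` is not computable, then its Walsh–Hadamard encoding `B` is absolutely
undecidable: no partial computable `φ : ℕ →. Bool` has domain of positive upper
density and is extended by `B`. -/
theorem walshHadamard_absolutelyUndecidable (A : ℕ → Bool) (hA : ¬ Computable A) :
    ¬ ∃ φ : ℕ →. Bool, Partrec φ ∧ 0 < upperDensity φ.Dom ∧
      SeqExtends (walshHadamard A) φ := by
  classical
  rintro ⟨φ, hφ, hρ, hext⟩
  apply hA
  haveI : DecidablePred (· ∈ φ.Dom) := Classical.decPred _
  obtain ⟨C, hC0, hgood⟩ := WHP.density_blocks φ.Dom hρ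
  have hφ' : Partrec fun n => (φ n).map Encodable.encode :=
    hφ.map (Computable.encode.comp Computable.snd).to₂
  obtain ⟨c, hc⟩ := Nat.Partrec.Code.exists_code.1 (Partrec.nat_iff.1 hφ')
  -- the true candidate is always consistent
  have hviol : ∀ k t, viol c t k (aenc A k) = 0 := by
    intro k t
    rw [viol_eq_zero_iff]
    intro j hj hne
    obtain ⟨v, hv⟩ : ∃ v, hval c t (2 ^ k + j) = v + 1 := by
      cases h : hval c t (2 ^ k + j) with
      | zero => exact absurd h hne
      | succ v => exact ⟨v, rfl⟩
    rw [hv]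
    have hev : v ∈ Nat.Partrec.Code.eval c (2 ^ k + j) :=
      Nat.Partrec.Code.evaln_sound (show v ∈ Nat.Partrec.Code.evaln t c (2 ^ k + j) by
        rw [hval_eq_succ_iff.1 hv]; rfl)
    rw [hc] at hev
    obtain ⟨b, hb, hbv⟩ := (Part.mem_map_iff _).1 hev
    have hBb : walshHadamard A (2 ^ k + j) = b := hext _ b hb
    rw [ip_aenc A hj, hBb, hbv]
  -- membership
  have hmem : ∀ k t m, m ≤ k → 1 ≤ cnt c k t m (aenc A m) := by
    intro k t m hmk
    rw [cnt_eq_card]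
    refine Finset.card_pos.2 ⟨aenc A k, ?_⟩
    rw [Finset.mem_filter, Finset.mem_range]
    exact ⟨aenc_lt A k, hviol k t, aenc_mod A hmk⟩
  -- a stage by which the whole block has converged
  have hT : ∀ k, ∃ T, ∀ j < 2 ^ k, (2 ^ k + j) ∈ φ.Dom → hval c T (2 ^ k + j) ≠ 0 := by
    intro k
    have hex : ∀ j : ℕ, ∃ t,
        ((2 ^ k + j) ∈ φ.Dom → hval c t (2 ^ k + j) ≠ 0) := by
      intro j
      by_cases hj : (2 ^ k + j) ∈ φ.Dom
      · have hb : (φ (2 ^ k + j)).get hj ∈ φ (2 ^ k + j) := Part.get_mem hj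
        have hm : Encodable.encode ((φ (2 ^ k + j)).get hj) ∈
            Nat.Partrec.Code.eval c (2 ^ k + j) := by
          rw [hc]
          exact Part.mem_map _ hb
        obtain ⟨t, ht⟩ := Nat.Partrec.Code.evaln_complete.1 hm
        refine ⟨t, fun _ => ?_⟩
        rw [hval_eq_succ_iff.2 ht]
        omega
      · exact ⟨0, fun h => absurd h hj⟩
    choose t ht using hex
    refine ⟨(Finset.range (2 ^ k)).sup t, ?_⟩
    intro j hj hdom
    have h1 := ht j hdom
    have h2 : t j ≤ (Finset.range (2 ^ k)).sup t := Finset.le_sup (Finset.mem_range.2 hj)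
    rw [hval_mono h2 h1]
    exact h1
  choose T hTspec using hT
  have hKinf : ∀ k₀, ∃ k, k₀ ≤ k ∧ 2 ^ k ≤ C * scnt c k (T k) := by
    intro k₀
    obtain ⟨k, hk1, hk2⟩ := hgood k₀
    refine ⟨k, hk1, le_trans hk2 (Nat.mul_le_mul_left C ?_)⟩
    rw [scnt_eq_card]
    refine Finset.card_le_card ?_
    intro j hj
    rw [Finset.mem_filter] at hj ⊢
    exact ⟨hj.1, hTspec k j (Finset.mem_range.1 hj.1) hj.2⟩
  set K : Set ℕ := {k | 2 ^ k ≤ C * scnt c k (T k)} with hKdef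
  set g : ℕ → ℕ → ℕ := fun j k => cnt c k (T k) j (aenc A j) with hgdef
  have g_le : ∀ j k, k ∈ K → g j k ≤ C := fun j k hk => cnt_le_of_good hk _ _
  have g_pos : ∀ j k, j ≤ k → 1 ≤ g j k := fun j k h => hmem k (T k) j h
  have g_anti : ∀ j j' k, j ≤ j' → g j' k ≤ g j k := by
    intro j j' k h
    have h2 := cnt_prefix c k (T k) h (aenc A j')
    rwa [aenc_mod A h] at h2
  set Q : ℕ → ℕ → Prop := fun j q => {k | k ∈ K ∧ j ≤ k ∧ q ≤ g j k}.Infinite with hQdef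
  have hQ1 : ∀ j, Q j 1 := by
    intro j
    have hinf : {k | k ∈ K ∧ j ≤ k}.Infinite := by
      refine Set.infinite_of_not_bddAbove ?_
      rintro ⟨b, hb⟩
      obtain ⟨k, hk1, hk2⟩ := hKinf (max b j + 1)
      have h3 := hb (show k ∈ {k | k ∈ K ∧ j ≤ k} from ⟨hk2, by omega⟩)
      omega
    exact hinf.mono fun k hk => ⟨hk.1, hk.2, g_pos _ _ hk.2⟩
  have hQmono : ∀ j j' q, j ≤ j' → Q j' q → Q j q := by
    intro j j' q h hq
    refine hq.mono ?_
    rintro k ⟨hk1, hk2, hk3⟩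
    exact ⟨hk1, le_trans h hk2, le_trans hk3 (g_anti j j' k h)⟩
  set cs : ℕ → ℕ := fun j => Nat.findGreatest (Q j) C with hcsdef
  have cs_pos : ∀ j, 1 ≤ cs j := fun j => Nat.le_findGreatest hC0 (hQ1 j)
  have cs_le : ∀ j, cs j ≤ C := fun j => Nat.findGreatest_le C
  have cs_spec : ∀ j, Q j (cs j) := fun j => Nat.findGreatest_spec hC0 (hQ1 j)
  have cs_max : ∀ j q, q ≤ C → Q j q → q ≤ cs j := fun j q h hq => Nat.le_findGreatest h hq
  have cs_anti : ∀ j j', j ≤ j' → cs j' ≤ cs j := fun j j' h =>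
    cs_max j (cs j') (cs_le j') (hQmono j j' _ h (cs_spec j'))
  obtain ⟨m0, hm0⟩ : ∃ m0, cs m0 = sInf (Set.range cs) :=
    Nat.sInf_mem (Set.range_nonempty cs)
  have cs_const : ∀ j, m0 ≤ j → cs j = cs m0 := by
    intro j hj
    refine le_antisymm (cs_anti m0 j hj) ?_
    rw [hm0]
    exact Nat.sInf_le ⟨j, rfl⟩
  -- existence of witnesses
  have hexist : ∀ L, m0 ≤ L → ∃ k, k ∈ K ∧ L ≤ k ∧
      ∀ j, m0 ≤ j → j ≤ L → g j k = cs m0 := by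
    intro L hL
    have h1 : Q L (cs m0) := by rw [← cs_const L hL]; exact cs_spec L
    have hBadFin : ∀ j, m0 ≤ j → {k | k ∈ K ∧ j ≤ k ∧ cs m0 + 1 ≤ g j k}.Finite := by
      intro j hj
      by_contra hfin
      have hinf : Q j (cs m0 + 1) := hfin
      have hC1 : cs m0 + 1 ≤ C := by
        by_contra hC1
        push_neg at hC1
        obtain ⟨k, hk⟩ := hinf.nonempty
        have := g_le j k hk.1
        have := hk.2.2
        omega
      have h2 := cs_max j _ hC1 hinf
      rw [cs_const j hj] at h2
      omega
    have hU : (⋃ j ∈ Set.Icc m0 L, {k | k ∈ K ∧ j ≤ k ∧ cs m0 + 1 ≤ g j k}).Finite :=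
      (Set.finite_Icc m0 L).biUnion' fun j hj => hBadFin j (Set.mem_Icc.1 hj).1
    obtain ⟨k, hk⟩ := (h1.diff hU).nonempty
    obtain ⟨⟨hk1, hk2, hk3⟩, hk4⟩ := hk
    refine ⟨k, hk1, hk2, fun j hj1 hj2 => ?_⟩
    have hgk : g j k ≤ cs m0 := by
      by_contra hgk
      push_neg at hgk
      exact hk4 (Set.mem_biUnion (Set.mem_Icc.2 ⟨hj1, hj2⟩)
        ⟨hk1, le_trans hj2 hk2, by omega⟩)
    have h5 : cs m0 ≤ g j k := le_trans hk3 (g_anti j L k hj2)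
    omega
  -- the search procedure
  have hexw : ∀ m : ℕ, ∃ w : ℕ,
      (decide (chk c m0 (aenc A m0) (cs m0) (m0 + 1 + m) w = 0)) = true := by
    intro m
    have hLm : m0 ≤ m0 + 1 + m := by omega
    obtain ⟨k, hk1, hk2, hk3⟩ := hexist (m0 + 1 + m) hLm
    refine ⟨Nat.pair (Nat.pair k (T k)) (aenc A (m0 + 1 + m)), ?_⟩
    simp only [decide_eq_true_eq]
    rw [chk_eq_zero_iff]
    simp only [Nat.unpair_pair]
    refine ⟨⟨hk2, aenc_lt A _, aenc_mod A hLm⟩, ?_⟩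
    intro j hj1 hj2
    rw [aenc_mod A hj2]
    exact hk3 j hj1 hj2
  -- soundness of the search
  have hsound : ∀ m w, chk c m0 (aenc A m0) (cs m0) (m0 + 1 + m) w = 0 →
      w.unpair.2 = aenc A (m0 + 1 + m) := by
    intro m w hw
    rw [chk_eq_zero_iff] at hw
    obtain ⟨⟨hkL, hτ, hτm⟩, hchain⟩ := hw
    have main : ∀ j, m0 ≤ j → j ≤ m0 + 1 + m →
        w.unpair.2 % 2 ^ j = aenc A j := by
      intro j hj1
      induction j, hj1 using Nat.le_induction with
      | base => intro _; exact hτm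
      | succ j hj ih =>
        intro hjL
        have hjL' : j ≤ m0 + 1 + m := by omega
        have hx := ih hjL'
        have hxlt : aenc A j < 2 ^ j := aenc_lt A j
        have hpart := cnt_partition c w.unpair.1.unpair.1 w.unpair.1.unpair.2
          (m := j) (σ := aenc A j) hxlt
        have hc1 : cnt c w.unpair.1.unpair.1 w.unpair.1.unpair.2 j (aenc A j) = cs m0 := by
          rw [← hx]; exact hchain j hj hjL'
        have hc2 : cnt c w.unpair.1.unpair.1 w.unpair.1.unpair.2 (j + 1)
            (w.unpair.2 % 2 ^ (j + 1)) = cs m0 := hchain (j + 1) (by omega) hjL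
        have hmem2 : 1 ≤ cnt c w.unpair.1.unpair.1 w.unpair.1.unpair.2 (j + 1)
            (aenc A (j + 1)) := hmem _ _ (j + 1) (by omega)
        have hsp : w.unpair.2 % 2 ^ (j + 1) = aenc A j ∨
            w.unpair.2 % 2 ^ (j + 1) = aenc A j + 2 ^ j := by
          have hsplit := Nat.mod_pow_succ (x := w.unpair.2) (b := 2) (k := j)
          rcases Nat.mod_two_eq_zero_or_one (w.unpair.2 / 2 ^ j) with hb | hb
          · left; rw [hsplit, hb, hx]; ring
          · right; rw [hsplit, hb, hx]; ring
        have hsp2 : aenc A (j + 1) = aenc A j ∨ aenc A (j + 1) = aenc A j + 2 ^ j := by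
          show aenc A j + (if A j then 2 ^ j else 0) = _ ∨
            aenc A j + (if A j then 2 ^ j else 0) = _
          split <;> simp
        by_cases heq : w.unpair.2 % 2 ^ (j + 1) = aenc A (j + 1)
        · exact heq
        · exfalso
          rcases hsp with h1 | h1 <;> rcases hsp2 with h2 | h2
          · exact heq (h1.trans h2.symm)
          · rw [h1] at hc2
            rw [h2] at hmem2
            omega
          · rw [h1] at hc2
            rw [h2] at hmem2
            omega
          · exact heq (h1.trans h2.symm)
    have h6 := main (m0 + 1 + m) (by omega) le_rfl
    rwa [Nat.mod_eq_of_lt hτ] at h6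
  -- computability
  have hcomp2 : Primrec fun p : ℕ × ℕ =>
      decide (chk c m0 (aenc A m0) (cs m0) (m0 + 1 + p.1) p.2 = 0) := by
    have h1 : Primrec fun p : ℕ × ℕ => chk c m0 (aenc A m0) (cs m0) (m0 + 1 + p.1) p.2 :=
      (primrec_chk c m0 (aenc A m0) (cs m0)).comp
        (Primrec.nat_add.comp (Primrec.const (m0 + 1)) Primrec.fst) Primrec.snd
    exact (Primrec.eq.comp h1 (Primrec.const 0)).decide
  have hpB : Computable₂ fun (m w : ℕ) =>
      decide (chk c m0 (aenc A m0) (cs m0) (m0 + 1 + m) w = 0) := hcomp2.to_comp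
  have hrfind : Partrec fun m : ℕ => Nat.rfind
      (fun w => Part.some (decide (chk c m0 (aenc A m0) (cs m0) (m0 + 1 + m) w = 0))) :=
    Partrec.rfind hpB.partrec₂
  have hpost : Computable₂ fun (m w : ℕ) => decide (w.unpair.2 / 2 ^ m % 2 = 1) := by
    have h1 : Primrec fun p : ℕ × ℕ => p.2.unpair.2 / 2 ^ p.1 % 2 :=
      Primrec.nat_mod.comp (Primrec.nat_div.comp
        (Primrec.snd.comp (Primrec.unpair.comp Primrec.snd))
        (primrec_pow2.comp Primrec.fst)) (Primrec.const 2)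
    exact (Primrec.eq.comp h1 (Primrec.const 1)).decide.to_comp
  have hfinal : Partrec fun m : ℕ => (Nat.rfind
      (fun w => Part.some (decide (chk c m0 (aenc A m0) (cs m0) (m0 + 1 + m) w = 0)))).map
      (fun w => decide (w.unpair.2 / 2 ^ m % 2 = 1)) := hrfind.map hpost
  refine hfinal.of_eq fun m => ?_
  have hw0 := Nat.find_spec (hexw m)
  have hrfeq : Nat.rfind
      (fun w => Part.some (decide (chk c m0 (aenc A m0) (cs m0) (m0 + 1 + m) w = 0)))
      = Part.some (Nat.find (hexw m)) := by
    rw [Part.eq_some_iff]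
    refine Nat.mem_rfind.2 ⟨?_, ?_⟩
    · rw [Part.mem_some_iff]
      exact hw0.symm
    · intro w hw
      rw [Part.mem_some_iff]
      have := Nat.find_min (hexw m) hw
      simpa using this
  rw [hrfeq, Part.map_some]
  show Part.some _ = Part.some (A m)
  congr 1
  have hs := hsound m (Nat.find (hexw m)) (by simpa using hw0)
  rw [hs, aenc_bit A (show m < m0 + 1 + m by omega)]
  cases hAm : A m <;> simp
end

section
/- A sequence A : ℕ → Bool is bi-immune if and only if there is no partial computable function φ : ℕ →. Bool with infinite domain that A extends. -/
/-- A sequence `A : ℕ → Bool` is bi-immune if no infinite computable set is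
contained in `{n | A n = true}` or in `{n | A n = false}`. -/
def BiImmune (A : ℕ → Bool) : Prop :=
  ¬ ∃ D : Set ℕ, D.Infinite ∧ ComputablePred (· ∈ D) ∧
      (D ⊆ {n | A n = true} ∨ D ⊆ {n | A n = false})

/-- A computable version of `Nat.find`. -/
theorem computable_nat_find {p : ℕ → ℕ → Prop} [H : ∀ N, DecidablePred (p N)]
    (hp : Computable₂ fun N m => decide (p N m)) (hex : ∀ N, ∃ m, p N m) :
    Computable fun N => Nat.find (hex N) := by
  have hr : Partrec fun N => Nat.rfind fun m => (decide (p N m) : Part Bool) :=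
    Partrec.rfind hp.partrec₂
  refine hr.of_eq_tot fun N => ?_
  refine Nat.mem_rfind.2 ?_
  constructor
  · simpa using Nat.find_spec (hex N)
  · intro m hm
    simpa using Nat.find_min (hex N) hm

/-- An infinite c.e. set of naturals (the set of `n` on which a partial computable
function takes value `b`) contains an infinite computable subset. -/
theorem exists_computable_subset {φ : ℕ →. Bool} (hφ : Partrec φ) (b : Bool)
    (hW : {n | b ∈ φ n}.Infinite) :
    ∃ D : Set ℕ, D.Infinite ∧ ComputablePred (· ∈ D) ∧ D ⊆ {n | b ∈ φ n} := by
  classical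
  -- get a code for `φ`
  have hnp : Nat.Partrec fun n => (φ n).map Encodable.encode := by
    have := hφ
    unfold Partrec at this
    exact this.of_eq fun n => by simp [Part.assert_pos]
  obtain ⟨c, hc⟩ := Nat.Partrec.Code.exists_code.1 hnp
  set W : Set ℕ := {n | b ∈ φ n} with hWdef
  have hmemW : ∀ n, n ∈ W ↔ ∃ k, Nat.Partrec.Code.evaln k c n = some (Encodable.encode b) := by
    intro n
    have h1 : n ∈ W ↔ Encodable.encode b ∈ Nat.Partrec.Code.eval c n := by
      rw [hc]
      simp only [hWdef, Set.mem_setOf_eq, Part.mem_map_iff]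
      constructor
      · exact fun h => ⟨b, h, rfl⟩
      · rintro ⟨a, ha, hab⟩
        rwa [Encodable.encode_injective hab] at ha
    rw [h1, Nat.Partrec.Code.evaln_complete]
    simp only [Option.mem_def]
  -- search predicate
  set p : ℕ → ℕ → Prop := fun N m =>
    N < m.unpair.2 ∧ Nat.Partrec.Code.evaln m.unpair.1 c m.unpair.2
      = some (Encodable.encode b) with hpdef
  have hex : ∀ N, ∃ m, p N m := by
    intro N
    obtain ⟨n, hn, hNn⟩ := hW.exists_gt N
    obtain ⟨k, hk⟩ := (hmemW n).1 hn
    exact ⟨Nat.pair k n, by simp [hpdef, hNn, hk]⟩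
  have hp : Computable₂ fun N m => decide (p N m) := by
    have h1 : Primrec fun m : ℕ =>
        Nat.Partrec.Code.evaln m.unpair.1 c m.unpair.2 :=
      Nat.Partrec.Code.primrec_evaln.comp <|
        ((Primrec.fst.comp Primrec.unpair).pair (Primrec.const c)).pair
          (Primrec.snd.comp Primrec.unpair)
    have ha : PrimrecPred fun x : ℕ × ℕ => x.1 < x.2.unpair.2 :=
      PrimrecRel.comp Primrec.nat_lt Primrec.fst
        ((Primrec.snd.comp Primrec.unpair).comp Primrec.snd)
    have hb : PrimrecPred fun x : ℕ × ℕ =>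
        Nat.Partrec.Code.evaln x.2.unpair.1 c x.2.unpair.2 = some (Encodable.encode b) :=
      PrimrecRel.comp Primrec.eq (h1.comp Primrec.snd) (Primrec.const _)
    have h2 : PrimrecPred fun x : ℕ × ℕ => p x.1 x.2 := (ha.and hb).of_eq fun x => by
      simp [hpdef]
    exact (Primrec.to_comp h2.decide).of_eq fun x => decide_eq_decide.2 Iff.rfl
  -- the strictly increasing enumeration
  set F : ℕ → ℕ := fun N => (Nat.find (hex N)).unpair.2 with hFdef
  have hFcomp : Computable F :=
    (Primrec.snd.comp Primrec.unpair).to_comp.comp (computable_nat_find hp hex)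
  have hFgt : ∀ N, N < F N := fun N => (Nat.find_spec (hex N)).1
  have hFW : ∀ N, F N ∈ W := fun N => (hmemW _).2 ⟨_, (Nat.find_spec (hex N)).2⟩
  set f : ℕ → ℕ := fun i => Nat.rec (motive := fun _ => ℕ) (F 0) (fun _ IH => F IH) i
    with hfdef
  have hfcomp : Computable f := by
    have := Computable.nat_rec (Computable.id (α := ℕ)) (Computable.const (F 0))
      ((hFcomp.comp (Computable.snd.comp Computable.snd)).to₂ :
        Computable₂ fun (_ : ℕ) (q : ℕ × ℕ) => F q.2)
    exact this.of_eq fun n => rfl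
  have hfW : ∀ i, f i ∈ W := by
    intro i; induction i with
    | zero => exact hFW 0
    | succ i _ => exact hFW (f i)
  have hfmono : StrictMono f := strictMono_nat_of_lt_succ fun i => hFgt (f i)
  -- inverse search
  have hex2 : ∀ n, ∃ i, n ≤ f i := fun n => ⟨n, hfmono.le_apply⟩
  set g : ℕ → ℕ := fun n => Nat.find (hex2 n) with hgdef
  have hgcomp : Computable g := by
    refine computable_nat_find ?_ hex2
    exact (Primrec.nat_le.decide.to_comp.comp Computable.fst (hfcomp.comp Computable.snd)).to₂
  refine ⟨Set.range f, Set.infinite_range_of_injective hfmono.injective, ?_, ?_⟩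
  · refine ⟨fun n => inferInstance, ?_⟩
    have hχ : Computable fun n => decide (f (g n) = n) :=
      Primrec.eq.decide.to_comp.comp (hfcomp.comp hgcomp) Computable.id
    refine hχ.of_eq fun n => ?_
    congr 1
    apply propext
    constructor
    · intro h; exact ⟨g n, h⟩
    · rintro ⟨i, rfl⟩
      have h1 : g (f i) ≤ i := Nat.find_min' (hex2 (f i)) le_rfl
      have h2 : f i ≤ f (g (f i)) := Nat.find_spec (hex2 (f i))
      rcases lt_or_eq_of_le h1 with h | h
      · exact absurd (hfmono h) (not_lt.2 h2)
      · rw [h]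
  · rintro n ⟨i, rfl⟩
    exact hfW i

/-- `A` is bi-immune if and only if `A` does not extend a partial computable
function with infinite domain. -/
theorem biImmune_iff_no_partrec_extension (A : ℕ → Bool) :
    BiImmune A ↔
      ¬ ∃ φ : ℕ →. Bool, Partrec φ ∧ φ.Dom.Infinite ∧ SeqExtends A φ := by
  classical
  constructor
  · intro hbi
    rintro ⟨φ, hφ, hdom, hext⟩
    -- one of the value sets is infinite
    have hsub : φ.Dom ⊆ {n | true ∈ φ n} ∪ {n | false ∈ φ n} := by
      intro n hn
      cases hb : (φ n).get hn with
      | true => exact Or.inl (by simpa [← hb] using Part.get_mem hn)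
      | false => exact Or.inr (by simpa [← hb] using Part.get_mem hn)
    have : ({n | true ∈ φ n} ∪ {n | false ∈ φ n}).Infinite := hdom.mono hsub
    rcases Set.infinite_union.1 this with hW | hW
    · obtain ⟨D, hDinf, hDcomp, hDsub⟩ := exists_computable_subset hφ true hW
      exact hbi ⟨D, hDinf, hDcomp, Or.inl fun n hn => hext n true (hDsub hn)⟩
    · obtain ⟨D, hDinf, hDcomp, hDsub⟩ := exists_computable_subset hφ false hW
      exact hbi ⟨D, hDinf, hDcomp, Or.inr fun n hn => hext n false (hDsub hn)⟩
  · intro h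
    rintro ⟨D, hDinf, hDcomp, hDsub⟩
    obtain ⟨χ, hχcomp, hχeq⟩ := ComputablePred.computable_iff.1 hDcomp
    have hmem : ∀ n, n ∈ D ↔ χ n = true := fun n => by
      rw [show (n ∈ D) = (χ n = true) from congrFun hχeq n]
    set b : Bool := if D ⊆ {n | A n = true} then true else false with hbdef
    have hDb : D ⊆ {n | A n = b} := by
      by_cases hc : D ⊆ {n | A n = true}
      · simpa [hbdef, if_pos hc] using hc
      · rcases hDsub with hs | hs
        · exact absurd hs hc
        · simpa [hbdef, if_neg hc] using hs
    refine h ⟨fun n => ((bif χ n then some b else none : Option Bool) : Part Bool), ?_, ?_, ?_⟩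
    · apply Computable.ofOption
      exact Computable.cond hχcomp (Computable.const (some b)) (Computable.const none)
    · have hDomEq :
          PFun.Dom (fun n => ((bif χ n then some b else none : Option Bool) : Part Bool)) = D := by
        ext n
        refine (PFun.mem_dom _ n).trans ?_
        rw [hmem n]
        constructor
        · rintro ⟨y, hy⟩
          by_contra hne
          rw [Bool.not_eq_true] at hne
          rw [hne] at hy
          simp at hy
        · intro ht
          exact ⟨b, by rw [ht]; simp⟩
      rw [hDomEq]
      exact hDinf
    · intro m b' hb'
      cases hχn : χ m with
      | false => simp [hχn] at hb'
      | true =>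
        simp only [hχn, cond_true] at hb'
        have : b' = b := by simpa using hb'
        rw [this]
        exact hDb ((hmem m).2 hχn)
end

section
/- Every bi-immune sequence is absolutely undecidable: if A : ℕ → Bool is bi-immune, then there is no partial computable function φ : ℕ →. Bool whose domain has positive upper density and which A extends. -/
/-- A set of positive upper density is infinite. -/
lemma infinite_of_pos_upperDensity {D : Set ℕ} (h : 0 < upperDensity D) : D.Infinite := by
  by_contra hfin
  rw [Set.not_infinite] at hfin
  have hten : Filter.Tendsto (fun n : ℕ => (Nat.card (D ∩ Set.Iio n : Set ℕ) : ℝ) / n)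
      Filter.atTop (nhds 0) := by
    apply tendsto_of_tendsto_of_tendsto_of_le_of_le (g := fun _ : ℕ => (0 : ℝ))
      (h := fun n : ℕ => (Nat.card D : ℝ) / n) tendsto_const_nhds
      (tendsto_const_div_atTop_nhds_zero_nat _)
    · intro n
      positivity
    · intro n
      apply div_le_div_of_nonneg_right ?_ (Nat.cast_nonneg n)
      exact Nat.cast_le.mpr (Nat.card_mono hfin Set.inter_subset_left)
  have := hten.limsup_eq
  rw [upperDensity] at h
  rw [this] at h
  exact lt_irrefl _ h

/-- Every bi-immune sequence is absolutely undecidable: it extends no partial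
computable function whose domain has positive upper density. -/
theorem biImmune_absolutelyUndecidable (A : ℕ → Bool) (hA : BiImmune A) :
    ¬ ∃ φ : ℕ →. Bool, Partrec φ ∧ 0 < upperDensity φ.Dom ∧ SeqExtends A φ := by
  classical
  rintro ⟨φ, hφ, hdens, hext⟩
  have hDinf : φ.Dom.Infinite := infinite_of_pos_upperDensity hdens
  -- turn φ into a ℕ →. ℕ function and get a code for it
  set f : ℕ →. ℕ := fun n => (φ n).map (fun b => cond b 1 0) with hfdef
  have hf : Partrec f :=
    hφ.map ((Computable.cond Computable.snd (Computable.const 1)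
      (Computable.const 0)).to₂ :
      Computable₂ fun (_ : ℕ) (b : Bool) => cond b 1 0)
  obtain ⟨c, hc⟩ := Nat.Partrec.Code.exists_code.1 (Partrec.nat_iff.1 hf)
  have hfdom : ∀ n, (f n).Dom ↔ n ∈ φ.Dom := fun n => Iff.rfl
  -- halting characterization via evaln
  have hhalt : ∀ n, n ∈ φ.Dom ↔ ∃ k, (Nat.Partrec.Code.evaln k c n).isSome := by
    intro n
    constructor
    · intro hn
      have hd : (f n).Dom := (hfdom n).2 hn
      obtain ⟨x, hx⟩ := Part.dom_iff_mem.1 hd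
      rw [← hc] at hx
      obtain ⟨k, hk⟩ := Nat.Partrec.Code.evaln_complete.1 hx
      exact ⟨k, by simp [Option.isSome_iff_exists]; exact ⟨x, hk⟩⟩
    · rintro ⟨k, hk⟩
      rw [Option.isSome_iff_exists] at hk
      obtain ⟨x, hx⟩ := hk
      have : x ∈ f n := by rw [← hc]; exact Nat.Partrec.Code.evaln_sound hx
      exact (hfdom n).1 (Part.dom_iff_mem.2 ⟨x, this⟩)
  -- the search predicate
  set pb : ℕ → ℕ → Bool := fun m p =>
    decide (m < p.unpair.2) && (Nat.Partrec.Code.evaln p.unpair.1 c p.unpair.2).isSome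
    with hpbdef
  have hpb : Computable₂ pb := by
    have hsnd : Primrec fun q : ℕ × ℕ => q.2 := Primrec.snd
    have hup : Primrec fun q : ℕ × ℕ => Nat.unpair q.2 := Primrec.unpair.comp hsnd
    have hn1 : Primrec fun q : ℕ × ℕ => (Nat.unpair q.2).1 := Primrec.fst.comp hup
    have hn2 : Primrec fun q : ℕ × ℕ => (Nat.unpair q.2).2 := Primrec.snd.comp hup
    have h1 : Primrec fun q : ℕ × ℕ => decide (q.1 < (Nat.unpair q.2).2) :=
      Primrec₂.comp Primrec.nat_lt.decide Primrec.fst hn2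
    have harg : Primrec fun q : ℕ × ℕ =>
        ((((Nat.unpair q.2).1, c), (Nat.unpair q.2).2) : (ℕ × Nat.Partrec.Code) × ℕ) :=
      (hn1.pair (Primrec.const c)).pair hn2
    have h2 : Primrec fun q : ℕ × ℕ =>
        (Nat.Partrec.Code.evaln (Nat.unpair q.2).1 c (Nat.unpair q.2).2).isSome :=
      Primrec.option_isSome.comp (Nat.Partrec.Code.primrec_evaln.comp harg)
    exact (Primrec₂.comp Primrec.and h1 h2).to_comp.to₂
  have hPex : ∀ m, ∃ p, pb m p = true := by
    intro m
    obtain ⟨n, hn, hmn⟩ := hDinf.exists_gt m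
    obtain ⟨k, hk⟩ := (hhalt n).1 hn
    refine ⟨Nat.pair k n, ?_⟩
    simp [hpbdef, Nat.unpair_pair, hmn, hk]
  -- the step function F
  set F : ℕ → ℕ := fun m => (Nat.find (hPex m)).unpair.2 with hFdef
  have hF0comp : Computable fun m => Nat.find (hPex m) := by
    have hr : Partrec fun m => Nat.rfind fun p => Part.some (pb m p) :=
      Partrec.rfind hpb.partrec₂
    apply hr.of_eq_tot
    intro m
    refine Nat.mem_rfind.2 ?_
    constructor
    · exact Part.mem_some_iff.2 (Nat.find_spec (hPex m)).symm
    · intro k hk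
      have h := Nat.find_min (hPex m) hk
      rw [Bool.not_eq_true] at h
      exact Part.mem_some_iff.2 h.symm
  have hFcomp : Computable F :=
    ((Primrec.snd.comp Primrec.unpair).to_comp).comp hF0comp
  have hFspec : ∀ m, pb m (Nat.find (hPex m)) = true := fun m => Nat.find_spec (hPex m)
  have hFspec' : ∀ m, (decide (m < (Nat.find (hPex m)).unpair.2)
      && (Nat.Partrec.Code.evaln (Nat.find (hPex m)).unpair.1 c
        (Nat.find (hPex m)).unpair.2).isSome) = true := fun m => hFspec m
  have hFgt : ∀ m, m < F m := by
    intro m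
    have h := hFspec' m
    rw [Bool.and_eq_true] at h
    exact of_decide_eq_true h.1
  have hFdom : ∀ m, F m ∈ φ.Dom := by
    intro m
    have h := hFspec' m
    rw [Bool.and_eq_true] at h
    exact (hhalt _).2 ⟨_, h.2⟩
  -- the monotone enumeration g
  set g : ℕ → ℕ := fun n => Nat.rec (F 0) (fun _ ih => F ih) n with hgdef
  have hgcomp : Computable g := by
    have := Computable.nat_rec (f := @id ℕ) (g := fun _ : ℕ => F 0)
      (h := fun (_ : ℕ) (p : ℕ × ℕ) => F p.2)
      Computable.id (Computable.const (F 0))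
      ((hFcomp.comp (Computable.snd.comp Computable.snd)).to₂)
    exact this.of_eq fun n => by simp [hgdef]
  have hg_lt : ∀ n, g n < g (n + 1) := fun n => hFgt (g n)
  have hgmono : StrictMono g := strictMono_nat_of_lt_succ hg_lt
  have hg_mem : ∀ n, g n ∈ φ.Dom := by
    intro n
    induction n with
    | zero => exact hFdom 0
    | succ k _ => exact hFdom (g k)
  have hg_ge : ∀ n, n ≤ g n := fun n => hgmono.le_apply
  -- least index K n with n ≤ g (K n)
  have hKex : ∀ n, ∃ k, decide (n ≤ g k) = true := fun n => ⟨n, by simp [hg_ge n]⟩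
  set K : ℕ → ℕ := fun n => Nat.find (hKex n) with hKdef
  have hKcomp : Computable K := by
    have hq : Computable₂ fun (n k : ℕ) => decide (n ≤ g k) :=
      (Primrec.nat_le.decide.to_comp.comp Computable.fst (hgcomp.comp Computable.snd)).to₂
    have hr : Partrec fun n => Nat.rfind fun k => Part.some (decide (n ≤ g k)) :=
      Partrec.rfind hq.partrec₂
    apply hr.of_eq_tot
    intro n
    refine Nat.mem_rfind.2 ?_
    constructor
    · exact Part.mem_some_iff.2 (Nat.find_spec (hKex n)).symm
    · intro k hk
      have h := Nat.find_min (hKex n) hk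
      rw [Bool.not_eq_true] at h
      exact Part.mem_some_iff.2 h.symm
  -- membership test for the range of g
  set fnd : ℕ → Bool := fun n => decide (g (K n) = n) with hfnddef
  have hfndcomp : Computable fnd :=
    Primrec.eq.decide.to_comp.comp (hgcomp.comp hKcomp) Computable.id
  have hfnd : ∀ n, fnd n = true ↔ n ∈ Set.range g := by
    intro n
    constructor
    · intro h
      exact ⟨K n, of_decide_eq_true h⟩
    · rintro ⟨j, rfl⟩
      have h1 : K (g j) ≤ j := Nat.find_min' (hKex (g j)) (by simp)
      have h2 : g j ≤ g (K (g j)) := of_decide_eq_true (Nat.find_spec (hKex (g j)))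
      have h3 : g (K (g j)) ≤ g j := hgmono.monotone h1
      simp [hfnddef, le_antisymm h3 h2]
  -- the total computable value function
  set θ : ℕ →. Bool := fun n => cond (fnd n) (φ n) (Part.some false) with hθdef
  have hθ : Partrec θ := Partrec.cond hfndcomp hφ (Computable.const false).partrec
  have hθdom : ∀ n, (θ n).Dom := by
    intro n
    rcases hb : fnd n with _ | _
    · simp [hθdef, hb]
    · simp only [hθdef, hb, cond_true]
      obtain ⟨k, hk⟩ := (hfnd n).1 hb
      exact hk ▸ hg_mem k
  set v : ℕ → Bool := fun n => (θ n).get (hθdom n) with hvdef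
  have hvcomp : Computable v := hθ.of_eq_tot fun n => Part.get_mem (hθdom n)
  have hvval : ∀ n, fnd n = true → v n ∈ φ n := by
    intro n hn
    have h : v n ∈ θ n := Part.get_mem (hθdom n)
    simp only [hθdef, hn, cond_true] at h
    exact h
  -- the two candidate sets
  set bt : ℕ → Bool := fun n => fnd n && v n with hbtdef
  set bf : ℕ → Bool := fun n => fnd n && !v n with hbfdef
  have hbtcomp : Computable bt := by
    have h := Computable.cond hfndcomp hvcomp (Computable.const false)
    refine h.of_eq fun n => ?_
    simp only [hbtdef]
    cases hfn : fnd n <;> simp [hfn]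
  have hbfcomp : Computable bf := by
    have h := Computable.cond hfndcomp
      ((Primrec.dom_bool Bool.not).to_comp.comp hvcomp) (Computable.const false)
    refine h.of_eq fun n => ?_
    simp only [hbfdef]
    cases hfn : fnd n <;> simp [hfn]
  set Dt : Set ℕ := {n | bt n = true} with hDtdef
  set Df : Set ℕ := {n | bf n = true} with hDfdef
  have hDtP : ComputablePred (· ∈ Dt) :=
    ComputablePred.computable_iff.2 ⟨bt, hbtcomp, rfl⟩
  have hDfP : ComputablePred (· ∈ Df) :=
    ComputablePred.computable_iff.2 ⟨bf, hbfcomp, rfl⟩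
  have hrange_sub : Set.range g ⊆ Dt ∪ Df := by
    rintro n ⟨k, rfl⟩
    have hb : fnd (g k) = true := (hfnd (g k)).2 ⟨k, rfl⟩
    rcases hvk : v (g k) with _ | _
    · right; simp [hDfdef, hbfdef, hb, hvk]
    · left; simp [hDtdef, hbtdef, hb, hvk]
  have hrange_inf : (Set.range g).Infinite :=
    Set.infinite_range_of_injective hgmono.injective
  have hunion_inf : (Dt ∪ Df).Infinite := hrange_inf.mono hrange_sub
  have hDtsub : Dt ⊆ {n | A n = true} := by
    intro n hn
    rw [hDtdef, Set.mem_setOf_eq, hbtdef, Bool.and_eq_true] at hn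
    have := hvval n hn.1
    rw [hn.2] at this
    exact hext n true this
  have hDfsub : Df ⊆ {n | A n = false} := by
    intro n hn
    rw [hDfdef, Set.mem_setOf_eq, hbfdef, Bool.and_eq_true, Bool.not_eq_true'] at hn
    have := hvval n hn.1
    rw [hn.2] at this
    exact hext n false this
  rcases Set.infinite_union.1 hunion_inf with h | h
  · exact hA ⟨Dt, h, hDtP, Or.inl hDtsub⟩
  · exact hA ⟨Df, h, hDfP, Or.inr hDfsub⟩
end

section
/- Any path through a computable tree of bounded width is computable: let T : List Bool → Bool be a computable function such that the set {σ : T(σ) = true} is closed under taking prefixes, and suppose there is k ∈ ℕ such that for every n the number of strings σ of length n with T(σ) = true is at most k. Then every X : ℕ → Bool all of whose finite initial segments σ satisfy T(σ) = true is computable. -/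
namespace PathTree

/-- All boolean lists of length `n`. -/
def allLists : ℕ → List (List Bool)
  | 0 => [[]]
  | n + 1 => (allLists n).flatMap (fun τ => [τ ++ [false], τ ++ [true]])

/-- `or` of all elements. -/
def orAll (l : List Bool) : Bool := l.foldr (· || ·) false

/-- number of `true`s. -/
def countTrue (l : List Bool) : ℕ := l.foldr (fun b n => cond b (n + 1) n) 0

/-- extendibility of τ by m further levels within tree T -/
def extB (T : List Bool → Bool) (τ : List Bool) (m : ℕ) : Bool :=
  orAll (((allLists m).map (fun ρ => τ ++ ρ)).map T)

/-- number of m-extendible strings of length L -/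
def countExt (T : List Bool → Bool) (m L : ℕ) : ℕ :=
  countTrue ((allLists L).map (fun τ => extB T τ m))

theorem primrec_allLists : Primrec allLists := by
  have hg : Primrec (fun τ : List Bool => [τ ++ [false], τ ++ [true]]) :=
    Primrec.list_cons.comp (Primrec.list_concat.comp .id (.const false))
      (Primrec.list_cons.comp (Primrec.list_concat.comp .id (.const true)) (.const []))
  have hstep : Primrec₂ (fun (_ : ℕ) (p : ℕ × List (List Bool)) =>
      p.2.flatMap (fun τ => [τ ++ [false], τ ++ [true]])) :=
    ((Primrec.list_flatMap (Primrec.snd.comp Primrec.snd) ((hg.comp Primrec.snd).to₂))).to₂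
  exact (Primrec.nat_rec' Primrec.id (Primrec.const [[]]) hstep).of_eq fun n => by
    induction n with
    | zero => rfl
    | succ n ih => simp only [allLists, id] at *; rw [← ih]

theorem primrec_orAll : Primrec orAll :=
  Primrec.list_foldr Primrec.id (Primrec.const false)
    ((Primrec.cond (Primrec.fst.comp Primrec.snd) (Primrec.const true)
      (Primrec.snd.comp Primrec.snd)).to₂)

theorem primrec_countTrue : Primrec countTrue :=
  Primrec.list_foldr Primrec.id (Primrec.const 0)
    ((Primrec.cond (Primrec.fst.comp Primrec.snd)
      (Primrec.succ.comp (Primrec.snd.comp Primrec.snd))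
      (Primrec.snd.comp Primrec.snd)).to₂)

/-- mapping a computable function over a computable list is computable -/
theorem computable_list_map {α β σ : Type*} [Primcodable α] [Primcodable β] [Primcodable σ]
    {f : α → List β} {g : α → β → σ} (hf : Computable f) (hg : Computable₂ g) :
    Computable fun a => (f a).map (g a) := by
  have h : Computable fun a => (Nat.rec (motive := fun _ => List σ) []
      (fun j ih => Option.casesOn (f a)[j]? ih (fun b => ih ++ [g a b]))
      (f a).length : List σ) := by
    refine Computable.nat_rec (f := fun a => (f a).length) (g := fun _ => ([] : List σ))
      (h := fun a p => Option.casesOn (f a)[p.1]? p.2 (fun b => p.2 ++ [g a b]))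
      (Computable.list_length.comp hf) (Computable.const []) ?_
    · exact Computable.option_casesOn
        ((Primrec.list_getElem?.to_comp).comp (hf.comp Computable.fst)
          (Computable.fst.comp Computable.snd))
        (Computable.snd.comp Computable.snd)
        (Computable.list_concat.comp
          ((Computable.snd.comp Computable.snd).comp Computable.fst)
          (hg.comp (Computable.fst.comp Computable.fst) Computable.snd))
  apply h.of_eq
  intro a
  have key : ∀ j : ℕ, (Nat.rec (motive := fun _ => List σ) []
      (fun j ih => Option.casesOn (f a)[j]? ih (fun b => ih ++ [g a b])) j : List σ)
      = ((f a).take j).map (g a) := by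
    intro j
    induction j with
    | zero => simp
    | succ j ih =>
      rw [List.take_succ]
      cases h' : (f a)[j]? with
      | none => simp [ih, h']
      | some b => simp [ih, h']
  rw [key, List.take_length]

theorem computable_extB {T : List Bool → Bool} (hT : Computable T) :
    Computable₂ (extB T) := by
  have h1 : Primrec fun p : List Bool × ℕ => (allLists p.2).map (fun ρ => p.1 ++ ρ) :=
    Primrec.list_map (primrec_allLists.comp Primrec.snd)
      (Primrec.list_append.comp₂ (Primrec.fst.comp₂ Primrec₂.left) Primrec₂.right)
  exact (primrec_orAll.to_comp.comp
    (computable_list_map h1.to_comp (hT.comp Computable.snd)))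

theorem computable_countExt {T : List Bool → Bool} (hT : Computable T) :
    Computable₂ (countExt T) := by
  exact (primrec_countTrue.to_comp.comp
    (computable_list_map ((primrec_allLists.comp Primrec.snd).to_comp)
      ((computable_extB hT).comp Computable.snd (Computable.fst.comp Computable.fst))))



section
variable (T : List Bool → Bool)

theorem mem_allLists {n : ℕ} {τ : List Bool} : τ ∈ allLists n ↔ τ.length = n := by
  induction n generalizing τ with
  | zero => simp [allLists, List.length_eq_zero_iff]
  | succ n ih =>
    simp only [allLists, List.mem_flatMap]
    constructor
    · rintro ⟨σ, hσ, hτ⟩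
      have hlen := ih.1 hσ
      simp only [List.mem_cons, List.mem_singleton, List.not_mem_nil, or_false] at hτ
      rcases hτ with rfl | rfl <;> simp [hlen]
    · intro hlen
      have hne : τ ≠ [] := by intro h; subst h; simp at hlen
      refine ⟨τ.dropLast, ih.2 (by rw [List.length_dropLast, hlen]; rfl), ?_⟩
      have hsp := (List.dropLast_append_getLast hne).symm
      simp only [List.mem_cons, List.mem_singleton, List.not_mem_nil, or_false]
      cases hb : τ.getLast hne
      · left; exact hsp.trans (by rw [hb])
      · right; exact hsp.trans (by rw [hb])

theorem nodup_allLists (n : ℕ) : (allLists n).Nodup := by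
  induction n with
  | zero => simp [allLists]
  | succ n ih =>
    rw [allLists, List.nodup_flatMap]
    refine ⟨fun τ _ => by simp, ?_⟩
    refine ih.imp ?_
    intro a b hab x hxa hxb
    simp only [List.mem_cons, List.mem_singleton, List.not_mem_nil, or_false] at hxa hxb
    rcases hxa with rfl | rfl <;> rcases hxb with h | h <;>
      exact hab (by simpa [List.dropLast_concat] using congrArg List.dropLast h)

theorem orAll_iff {l : List Bool} : orAll l = true ↔ true ∈ l := by
  induction l with
  | nil => simp [orAll]
  | cons b l ih =>
    have : orAll (b :: l) = (b || orAll l) := rfl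
    rw [this]
    cases b <;> simp [ih, eq_comm]

theorem extB_iff {τ : List Bool} {m : ℕ} :
    extB T τ m = true ↔ ∃ ρ : List Bool, ρ.length = m ∧ T (τ ++ ρ) = true := by
  simp only [extB, orAll_iff, List.mem_map, mem_allLists]
  constructor
  · rintro ⟨x, ⟨ρ, hρ, rfl⟩, hT⟩
    exact ⟨ρ, hρ, hT⟩
  · rintro ⟨ρ, hρ, hT⟩
    exact ⟨τ ++ ρ, ⟨ρ, hρ, rfl⟩, hT⟩

variable (hprefix : ∀ σ τ : List Bool, σ <+: τ → T τ = true → T σ = true)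

include hprefix

theorem extB_succ {τ : List Bool} {m : ℕ} (h : extB T τ (m + 1) = true) :
    extB T τ m = true := by
  rcases (extB_iff T).1 h with ⟨ρ, hρ, hT⟩
  have hne : ρ ≠ [] := by intro h'; subst h'; simp at hρ
  refine (extB_iff T).2 ⟨ρ.dropLast, by simp [List.length_dropLast, hρ], ?_⟩
  refine hprefix _ _ ⟨[ρ.getLast hne], ?_⟩ hT
  rw [List.append_assoc, List.dropLast_append_getLast hne]

theorem extB_mono {τ : List Bool} {m m' : ℕ} (hmm : m ≤ m') (h : extB T τ m' = true) :
    extB T τ m = true := by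
  obtain ⟨d, rfl⟩ := Nat.exists_eq_add_of_le hmm
  clear hmm
  revert h
  induction d with
  | zero => intro h; simpa using h
  | succ d ih => intro h; exact ih (extB_succ T hprefix h)

/-- τ is on a path (extendible to every length) -/
def Ext (τ : List Bool) : Prop := ∀ m, extB T τ m = true

theorem ext_T {τ : List Bool} (h : Ext T τ) : T τ = true := by
  rcases (extB_iff T).1 (h 0) with ⟨ρ, hρ, hT⟩
  rw [List.length_eq_zero_iff] at hρ; subst hρ; simpa using hT

theorem ext_of_prefix {σ τ : List Bool} (hst : σ <+: τ) (h : Ext T τ) : Ext T σ := by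
  intro m
  rcases hst with ⟨δ, rfl⟩
  rcases (extB_iff T).1 (h m) with ⟨ρ, hρ, hT⟩
  have hbig : extB T σ (δ.length + m) = true :=
    (extB_iff T).2 ⟨δ ++ ρ, by simp [hρ], by rwa [← List.append_assoc]⟩
  exact extB_mono T hprefix (Nat.le_add_left m δ.length) hbig

theorem ext_X (X : ℕ → Bool) (hX : ∀ n, T (List.ofFn fun i : Fin n => X i) = true) (n : ℕ) :
    Ext T (List.ofFn fun i : Fin n => X i) := by
  intro m
  refine (extB_iff T).2 ⟨List.ofFn (fun i : Fin m => X (n + i)), by simp, ?_⟩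
  have h1 : (List.ofFn fun i : Fin n => X i) ++ (List.ofFn fun j : Fin m => X (n + j))
      = List.ofFn fun i : Fin (n + m) => X i := by
    rw [List.ofFn_add]
    congr 1
  rw [h1]; exact hX (n + m)

theorem ext_step {τ : List Bool} (h : Ext T τ) : ∃ b, Ext T (τ ++ [b]) := by
  have key : ∀ m, extB T (τ ++ [false]) m = true ∨ extB T (τ ++ [true]) m = true := by
    intro m
    rcases (extB_iff T).1 (h (m + 1)) with ⟨ρ, hρ, hT⟩
    cases ρ with
    | nil => simp at hρ
    | cons b ρ' =>
      have hT' : T ((τ ++ [b]) ++ ρ') = true := by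
        rwa [List.append_assoc, List.singleton_append]
      have h' : extB T (τ ++ [b]) m = true :=
        (extB_iff T).2 ⟨ρ', by simpa using hρ, hT'⟩
      cases b
      · exact Or.inl h'
      · exact Or.inr h'
  by_cases hf : Ext T (τ ++ [false])
  · exact ⟨false, hf⟩
  · refine ⟨true, fun m => ?_⟩
    rw [Ext] at hf; push_neg at hf
    obtain ⟨m0, hm0⟩ := hf
    rcases key (max m m0) with hl | hr
    · exact absurd (extB_mono T hprefix (le_max_right m m0) hl) hm0
    · exact extB_mono T hprefix (le_max_left m m0) hr

theorem ext_extend {τ : List Bool} (h : Ext T τ) :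
    ∀ j, ∃ ρ : List Bool, ρ.length = j ∧ Ext T (τ ++ ρ) := by
  intro j
  induction j with
  | zero => exact ⟨[], rfl, by simpa using h⟩
  | succ j ih =>
    obtain ⟨ρ, hρ, hE⟩ := ih
    obtain ⟨b, hb⟩ := ext_step T hprefix hE
    exact ⟨ρ ++ [b], by simp [hρ], by rwa [← List.append_assoc]⟩


open Classical in
/-- the extendible strings of length n -/
noncomputable def extSet (n : ℕ) : Finset (List Bool) :=
  (allLists n).toFinset.filter (fun τ => Ext T τ)

omit hprefix in
theorem mem_extSet {n : ℕ} {τ : List Bool} :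
    τ ∈ extSet T n ↔ τ.length = n ∧ Ext T τ := by
  classical
  simp [extSet, List.mem_toFinset, mem_allLists]

theorem extSet_card_mono : Monotone fun n => (extSet T n).card := by
  apply monotone_nat_of_le_succ
  intro n
  classical
  apply Finset.card_le_card_of_injOn
    (fun τ => τ ++ [if Ext T (τ ++ [false]) then false else true])
  · intro τ hτ
    simp only [Finset.mem_coe, mem_extSet] at hτ ⊢
    obtain ⟨hlen, hE⟩ := hτ
    refine ⟨by simp [hlen], ?_⟩
    split_ifs with h
    · exact h
    · obtain ⟨b, hb⟩ := ext_step T hprefix hE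
      cases b
      · exact absurd hb h
      · exact hb
  · intro a _ b _ hab
    simpa [List.dropLast_concat] using congrArg List.dropLast hab

theorem extSet_card_le (k : ℕ)
    (hwidth : ∀ n, Nat.card {σ : List Bool | σ.length = n ∧ T σ = true} ≤ k) (n : ℕ) :
    (extSet T n).card ≤ k := by
  have hsub : ↑(extSet T n) ⊆ {σ : List Bool | σ.length = n ∧ T σ = true} := by
    intro τ hτ
    rw [Finset.mem_coe, mem_extSet] at hτ
    exact ⟨hτ.1, ext_T T hprefix hτ.2⟩
  have hfin : ({σ : List Bool | σ.length = n ∧ T σ = true}).Finite := by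
    apply Set.Finite.subset (allLists n).toFinset.finite_toSet
    intro τ hτ
    simp [List.mem_toFinset, mem_allLists, hτ.1]
  calc (extSet T n).card = (↑(extSet T n) : Set (List Bool)).ncard :=
        (Set.ncard_coe_finset _).symm
    _ ≤ ({σ : List Bool | σ.length = n ∧ T σ = true}).ncard := Set.ncard_le_ncard hsub hfin
    _ = Nat.card {σ : List Bool | σ.length = n ∧ T σ = true} :=
        (Nat.card_coe_set_eq _).symm
    _ ≤ k := hwidth n

theorem exists_stab (k : ℕ)
    (hwidth : ∀ n, Nat.card {σ : List Bool | σ.length = n ∧ T σ = true} ≤ k) :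
    ∃ N, ∀ n, N ≤ n → (extSet T n).card = (extSet T N).card := by
  set e := fun n => (extSet T n).card with he
  have hb : BddAbove (Set.range e) := by
    refine ⟨k, ?_⟩
    rintro x ⟨n, rfl⟩
    exact extSet_card_le T hprefix k hwidth n
  obtain ⟨N, hN⟩ := Nat.sSup_mem (Set.range_nonempty e) hb
  refine ⟨N, fun n hn => ?_⟩
  have h1 : e n ≤ sSup (Set.range e) := le_csSup hb ⟨n, rfl⟩
  rw [← hN] at h1
  exact le_antisymm h1 (extSet_card_mono T hprefix hn)

theorem ext_unique {N : ℕ} (hN : ∀ n, N ≤ n → (extSet T n).card = (extSet T N).card)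
    {n : ℕ} (hn : N ≤ n) {τ₁ τ₂ : List Bool}
    (h1 : τ₁ ∈ extSet T n) (h2 : τ₂ ∈ extSet T n)
    (ht : τ₁.take N = τ₂.take N) : τ₁ = τ₂ := by
  classical
  have hwd : ∀ τ ∈ extSet T n, τ.take N ∈ extSet T N := by
    intro τ hτ
    rw [mem_extSet] at hτ ⊢
    exact ⟨by rw [List.length_take, hτ.1]; omega,
      ext_of_prefix T hprefix (List.take_prefix N τ) hτ.2⟩
  have hsub1 : (extSet T n).image (fun τ => τ.take N) ⊆ extSet T N := by
    intro x hx
    rw [Finset.mem_image] at hx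
    obtain ⟨τ, hτ, rfl⟩ := hx
    exact hwd τ hτ
  have hsub2 : extSet T N ⊆ (extSet T n).image (fun τ => τ.take N) := by
    intro σ hσ
    rw [mem_extSet] at hσ
    obtain ⟨ρ, hρ, hE⟩ := ext_extend T hprefix hσ.2 (n - N)
    rw [Finset.mem_image]
    refine ⟨σ ++ ρ, ?_, ?_⟩
    · rw [mem_extSet]
      refine ⟨?_, hE⟩
      rw [List.length_append, hσ.1, hρ]
      omega
    · rw [← hσ.1, List.take_left]
  have heq : (extSet T n).image (fun τ => τ.take N) = extSet T N :=
    Finset.Subset.antisymm hsub1 hsub2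
  have hcard : ((extSet T n).image (fun τ => τ.take N)).card = (extSet T n).card := by
    rw [heq, hN n hn]
  exact (Finset.card_image_iff.1 hcard) (Finset.mem_coe.2 h1) (Finset.mem_coe.2 h2) ht

omit hprefix in
theorem countTrue_eq {α : Type*} (l : List α) (p : α → Bool) :
    countTrue (l.map p) = (l.filter p).length := by
  induction l with
  | nil => rfl
  | cons a l ih =>
    have hc : countTrue (p a :: l.map p) = cond (p a) (countTrue (l.map p) + 1)
        (countTrue (l.map p)) := rfl
    rw [List.map_cons, hc, List.filter_cons]
    cases h : p a
    · simpa using ih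
    · simpa using ih

omit hprefix in
theorem countExt_card (m L : ℕ) :
    countExt T m L = ((allLists L).toFinset.filter (fun τ => extB T τ m = true)).card := by
  rw [countExt, countTrue_eq, ← List.toFinset_filter]
  exact (List.toFinset_card_of_nodup ((nodup_allLists L).filter _)).symm

omit hprefix in
theorem extSet_subset_filter (m L : ℕ) :
    extSet T L ⊆ (allLists L).toFinset.filter (fun τ => extB T τ m = true) := by
  intro τ hτ
  rw [mem_extSet] at hτ
  rw [Finset.mem_filter, List.mem_toFinset, mem_allLists]
  exact ⟨hτ.1, hτ.2 m⟩

theorem exists_good_m (L : ℕ) :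
    ∃ m, (allLists L).toFinset.filter (fun τ => extB T τ m = true) = extSet T L := by
  classical
  set B := (allLists L).toFinset.filter (fun τ => ¬ Ext T τ) with hB
  set F : List Bool → ℕ := fun τ => if h : ∃ m, extB T τ m ≠ true then Nat.find h else 0
    with hF
  refine ⟨B.sup F, Finset.Subset.antisymm ?_ (extSet_subset_filter T _ _)⟩
  intro τ hτ
  rw [Finset.mem_filter, List.mem_toFinset, mem_allLists] at hτ
  rw [mem_extSet]
  refine ⟨hτ.1, ?_⟩
  by_contra hE
  have hτB : τ ∈ B := by
    rw [hB, Finset.mem_filter, List.mem_toFinset, mem_allLists]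
    exact ⟨hτ.1, hE⟩
  have hex : ∃ m, extB T τ m ≠ true := by
    rw [Ext] at hE; push_neg at hE
    obtain ⟨m, hm⟩ := hE
    exact ⟨m, by simp [hm]⟩
  have h1 : extB T τ (F τ) ≠ true := by
    rw [hF]; simp only [dif_pos hex]; exact Nat.find_spec hex
  exact h1 (extB_mono T hprefix (Finset.le_sup hτB) hτ.2)

theorem exists_m_count {N : ℕ} (hstab : ∀ n, N ≤ n → (extSet T n).card = (extSet T N).card)
    {L : ℕ} (hL : N ≤ L) : ∃ m, countExt T m L = (extSet T N).card := by
  obtain ⟨m, hm⟩ := exists_good_m T hprefix L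
  exact ⟨m, by rw [countExt_card, hm, hstab L hL]⟩

omit hprefix in
theorem filter_eq_extSet_of_card {N : ℕ}
    (hstab : ∀ n, N ≤ n → (extSet T n).card = (extSet T N).card)
    {L m : ℕ} (hL : N ≤ L) (hc : countExt T m L = (extSet T N).card) :
    (allLists L).toFinset.filter (fun τ => extB T τ m = true) = extSet T L := by
  apply (Finset.eq_of_subset_of_card_le (extSet_subset_filter T m L) ?_).symm
  rw [← countExt_card, hc, hstab L hL]

end

theorem flatten_map_cond (p : List Bool → Bool) (l : List (List Bool)) :
    (l.map (fun τ => cond (p τ) τ [])).flatten = (l.filter p).flatten := by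
  induction l with
  | nil => rfl
  | cons a l ih =>
    rw [List.map_cons, List.flatten_cons, List.filter_cons]
    cases h : p a <;> simp [ih]

theorem filter_eq_singleton {α : Type*} {l : List α} {p : α → Bool} {a : α}
    (hnd : l.Nodup) (ha : a ∈ l) (hpa : p a = true)
    (huniq : ∀ x ∈ l, p x = true → x = a) : l.filter p = [a] := by
  have h1 : ∀ x ∈ l.filter p, x = a := fun x hx =>
    huniq x (List.mem_filter.1 hx).1 (List.mem_filter.1 hx).2
  have h2 : a ∈ l.filter p := List.mem_filter.2 ⟨ha, hpa⟩
  have h3 : (l.filter p).Nodup := hnd.filter p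
  cases hf : l.filter p with
  | nil => rw [hf] at h2; simp at h2
  | cons b t =>
    rw [hf] at h1 h2 h3
    have hb : b = a := h1 b List.mem_cons_self
    subst hb
    cases t with
    | nil => rfl
    | cons c t' =>
      have hc : c = b := h1 c (by simp)
      rw [List.nodup_cons] at h3
      exact absurd (by simp [hc]) h3.1

end PathTree

open PathTree in
theorem path_aux
    (T : List Bool → Bool) (hT : Computable T)
    (hprefix : ∀ σ τ : List Bool, σ <+: τ → T τ = true → T σ = true)
    (k : ℕ) (hwidth : ∀ n, Nat.card {σ : List Bool | σ.length = n ∧ T σ = true} ≤ k)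
    (X : ℕ → Bool) (hX : ∀ n, T (List.ofFn fun i : Fin n => X i) = true) :
    Computable X := by
  classical
  obtain ⟨N, hstab⟩ := exists_stab T hprefix k hwidth
  set σ0 : List Bool := List.ofFn fun i : Fin N => X i with hσ0
  have hfind : ∀ n : ℕ, ∃ m, countExt T m (N + (n + 1)) = (extSet T N).card :=
    fun n => exists_m_count T hprefix hstab (by omega)
  set mf : ℕ → ℕ := fun n => Nat.find (hfind n) with hmf
  -- computability of the search function mf
  have hq : Computable₂ (fun n m => countExt T m (N + (n + 1)) == (extSet T N).card) := by
    have hL : Primrec (fun p : ℕ × ℕ => N + (p.1 + 1)) :=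
      Primrec.nat_add.comp (Primrec.const N) (Primrec.succ.comp Primrec.fst)
    exact Primrec.beq.to_comp.comp
      ((computable_countExt hT).comp Computable.snd hL.to_comp)
      (Computable.const _)
  have hmf_comp : Computable mf := by
    have hp : Partrec fun n : ℕ => Nat.rfind fun m =>
        ((fun n m => countExt T m (N + (n + 1)) == (extSet T N).card) n m : Part Bool) :=
      Partrec.rfind hq.partrec₂
    apply hp.of_eq_tot
    intro n
    refine Nat.mem_rfind.2 ?_
    constructor
    · refine Part.mem_some_iff.2 ?_
      symm; rw [beq_iff_eq]
      exact Nat.find_spec (hfind n)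
    · intro m hm
      refine Part.mem_some_iff.2 ?_
      symm; rw [beq_eq_false_iff_ne]
      exact Nat.find_min (hfind n) hm
  -- the algorithm
  have hlst_pr : Primrec fun n : ℕ => (allLists (n + 1)).map (fun ρ => σ0 ++ ρ) :=
    Primrec.list_map (primrec_allLists.comp Primrec.succ)
      (Primrec.list_append.comp₂ (Primrec₂.const σ0) Primrec₂.right)
  have hgc : Computable fun n : ℕ =>
      ((((allLists (n + 1)).map (fun ρ => σ0 ++ ρ)).map
        (fun τ => cond (extB T τ (mf n)) τ [])).flatten).getD n false := by
    have hcnd : Computable₂ fun (n : ℕ) (τ : List Bool) => cond (extB T τ (mf n)) τ [] :=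
      Computable.cond ((computable_extB hT).comp Computable.snd (hmf_comp.comp Computable.fst))
        Computable.snd (Computable.const [])
    have hmid : Computable fun n : ℕ =>
        (((allLists (n + 1)).map (fun ρ => σ0 ++ ρ)).map
          (fun τ => cond (extB T τ (mf n)) τ [])).flatten :=
      Primrec.list_flatten.to_comp.comp (computable_list_map hlst_pr.to_comp hcnd)
    exact (Primrec.list_getD false).to_comp.comp hmid Computable.id
  apply hgc.of_eq
  intro n
  set L := N + (n + 1) with hLdef
  have hcount : countExt T (mf n) L = (extSet T N).card := Nat.find_spec (hfind n)
  have hfilterEq := filter_eq_extSet_of_card T hstab (show N ≤ L by omega) hcount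
  set XL : List Bool := List.ofFn fun i : Fin L => X i with hXL
  have hXLE : Ext T XL := ext_X T hprefix X hX L
  have hXLlen : XL.length = L := by rw [hXL, List.length_ofFn]
  have hsplit : XL = σ0 ++ List.ofFn (fun j : Fin (n + 1) => X (N + ↑j)) := by
    rw [hXL, hLdef, List.ofFn_add, hσ0]
    congr 1
  set lst := (allLists (n + 1)).map (fun ρ => σ0 ++ ρ) with hlst
  have hσ0len : σ0.length = N := by rw [hσ0]; simp
  have hmemlst : XL ∈ lst := by
    rw [hlst, hsplit]
    exact List.mem_map.2 ⟨_, mem_allLists.2 (by simp), rfl⟩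
  have hlen_lst : ∀ τ ∈ lst, τ.length = L := by
    intro τ hτ
    rw [hlst] at hτ
    rcases List.mem_map.1 hτ with ⟨ρ, hρ, rfl⟩
    rw [mem_allLists] at hρ
    rw [List.length_append, hρ, hσ0len]
  have hmem_extSet : ∀ τ : List Bool, τ.length = L → extB T τ (mf n) = true →
      τ ∈ extSet T L := by
    intro τ h1 h2
    rw [← hfilterEq, Finset.mem_filter, List.mem_toFinset, mem_allLists]
    exact ⟨h1, h2⟩
  have hXLp : extB T XL (mf n) = true := hXLE (mf n)
  have huniq : ∀ τ ∈ lst, extB T τ (mf n) = true → τ = XL := by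
    intro τ hτ hp
    have h1 := hmem_extSet τ (hlen_lst τ hτ) hp
    have h2 : XL ∈ extSet T L := (mem_extSet T).2 ⟨hXLlen, hXLE⟩
    apply ext_unique T hprefix hstab (show N ≤ L by omega) h1 h2
    rw [hlst] at hτ
    rcases List.mem_map.1 hτ with ⟨ρ, _, rfl⟩
    rw [hsplit, List.take_left' hσ0len, List.take_left' hσ0len]
  have hnodup : lst.Nodup := by
    rw [hlst]
    exact List.Nodup.map (fun a b h => List.append_cancel_left h) (nodup_allLists _)
  have hfilter : lst.filter (fun τ => extB T τ (mf n)) = [XL] :=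
    filter_eq_singleton hnodup hmemlst hXLp huniq
  have hn_lt : n < XL.length := by rw [hXLlen]; omega
  rw [flatten_map_cond, hfilter]
  rw [List.flatten_cons, List.flatten_nil, List.append_nil,
    List.getD_eq_getElem _ _ hn_lt]
  exact List.getElem_ofFn _

/-- Any path through a computable tree of bounded width is computable. Here the tree
is given by a computable characteristic function `T : List Bool → Bool` which is
prefix-closed, and each level `n` contains at most `k` strings. -/
theorem path_of_bounded_width_tree_computable
    (T : List Bool → Bool) (hT : Computable T)
    (hprefix : ∀ σ τ : List Bool, σ <+: τ → T τ = true → T σ = true)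
    (k : ℕ) (hwidth : ∀ n, Nat.card {σ : List Bool | σ.length = n ∧ T σ = true} ≤ k)
    (X : ℕ → Bool) (hX : ∀ n, T (List.ofFn fun i : Fin n => X i) = true) :
    Computable X := by
  exact path_aux T hT hprefix k hwidth X hX
end
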